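/- arXiv:2201.00468 — 6 statements merged into one kernel-verified Lean document; each statement's English description precedes it below -/
import Mathlib

section
/- Double-robust representation of the mean (equation (8) of the paper): Let π*: 𝒳 → (c, 1−c) and m*: 𝒳 → ℝ be measurable with E[|m*(X)|] < ∞. If either π*(X) = π(X) almost surely or m*(X) = m(X) almost surely (but not necessarily both), then E[m*(X)] + E[π*(X)^{−1} T (Y − m*(X))] = μ0. -/
/-!
Statement 0 (equation (8) of the paper): double-robust representation of the mean.
If either the working propensity score `πs` or the working outcome regression `ms`
is correctly specified (almost surely), then
`E[m*(X)] + E[π*(X)⁻¹ T (Y − m*(X))] = μ0 := E[Y]`.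
-/

open MeasureTheory ProbabilityTheory

section AuxLemmas
open Set

lemma dr_measure_aux {Ω : Type*} [MeasurableSpace Ω] (ν : Measure Ω) [IsProbabilityMeasure ν]
    {A : Set Ω} (hA : MeasurableSet A) {Y : Ω → ℝ} (hY : Measurable Y)
    (hYint : Integrable Y ν)
    (h : ∀ q : ℚ, ν (A ∩ Y ⁻¹' Set.Iic (q : ℝ)) = ν A * ν (Y ⁻¹' Set.Iic (q : ℝ))) :
    ∫ ω in A, Y ω ∂ν = (ν A).toReal * ∫ ω, Y ω ∂ν := by
  have hmap : (ν.restrict A).map Y = (ν A) • (ν.map Y) := by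
    refine ext_of_generate_finite (⋃ a : ℚ, {Iic (a : ℝ)})
      (BorelSpace.measurable_eq.trans Real.borel_eq_generateFrom_Iic_rat) ?_ ?_ ?_
    · rintro s hs t ht -
      simp only [Set.mem_iUnion, Set.mem_singleton_iff] at hs ht ⊢
      obtain ⟨q, rfl⟩ := hs; obtain ⟨r, rfl⟩ := ht
      exact ⟨min q r, by rw [Set.Iic_inter_Iic, Rat.cast_min]⟩
    · rintro s hs
      simp only [Set.mem_iUnion, Set.mem_singleton_iff] at hs
      obtain ⟨q, rfl⟩ := hs
      rw [Measure.map_apply hY measurableSet_Iic, Measure.restrict_apply (hY measurableSet_Iic),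
        Set.inter_comm, Measure.smul_apply, Measure.map_apply hY measurableSet_Iic, smul_eq_mul]
      exact h q
    · rw [Measure.map_apply hY MeasurableSet.univ, Set.preimage_univ,
        Measure.restrict_apply_univ, Measure.smul_apply, Measure.map_apply hY MeasurableSet.univ,
        Set.preimage_univ, measure_univ, smul_eq_mul, mul_one]
  calc ∫ ω in A, Y ω ∂ν = ∫ y, y ∂((ν.restrict A).map Y) :=
        (integral_map hY.aemeasurable aestronglyMeasurable_id).symm
    _ = ∫ y, y ∂((ν A) • (ν.map Y)) := by rw [hmap]
    _ = (ν A).toReal * ∫ y, y ∂(ν.map Y) := by rw [integral_smul_measure, smul_eq_mul]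
    _ = (ν A).toReal * ∫ ω, Y ω ∂ν := by
        have : ∫ y, y ∂(ν.map Y) = ∫ ω, Y ω ∂ν :=
          integral_map hY.aemeasurable aestronglyMeasurable_id
        rw [this]

lemma dr_condexp_mul {Ω : Type*} {m' : MeasurableSpace Ω}
    [mΩ : MeasurableSpace Ω] [StandardBorelSpace Ω]
    {μ : Measure Ω} [IsProbabilityMeasure μ] (hm' : m' ≤ mΩ)
    {T Y : Ω → ℝ} (hT : Measurable T) (hY : Measurable Y)
    (hT01 : ∀ ω, T ω = 0 ∨ T ω = 1) (hYint : Integrable Y μ)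
    (h : CondIndepFun m' hm' T Y μ) :
    μ[fun ω => T ω * Y ω|m'] =ᵐ[μ]
      fun ω => (μ[T|m']) ω * (μ[Y|m']) ω := by
  set A : Set Ω := T ⁻¹' {1} with hAdef
  have hA : MeasurableSet A := hT (measurableSet_singleton 1)
  have hTind : T = A.indicator (fun _ => (1 : ℝ)) := by
    funext ω
    rcases hT01 ω with h0 | h1
    · rw [h0, Set.indicator_of_notMem]
      simp [hAdef, Set.mem_preimage, h0]
    · rw [h1, Set.indicator_of_mem]
      simp [hAdef, Set.mem_preimage, h1]
  have hTint : Integrable T μ := by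
    rw [hTind]; exact (integrable_const (1 : ℝ)).indicator hA
  have hTbd : ∀ ω, ‖T ω‖ ≤ 1 := by
    intro ω; rcases hT01 ω with h0 | h0 <;> simp [h0]
  have hTYint : Integrable (fun ω => T ω * Y ω) μ :=
    hYint.bdd_mul hT.aestronglyMeasurable (Filter.Eventually.of_forall hTbd)
  -- the kernel independence fact, for all rational thresholds, a.e.
  have hq : ∀ᵐ ω ∂μ, ∀ q : ℚ,
      condExpKernel μ m' ω (A ∩ Y ⁻¹' Set.Iic (q : ℝ))
        = condExpKernel μ m' ω A * condExpKernel μ m' ω (Y ⁻¹' Set.Iic (q : ℝ)) := by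
    refine ae_of_ae_trim hm' (ae_all_iff.mpr fun q => ?_)
    exact h.measure_inter_preimage_eq_mul {1} (Set.Iic (q : ℝ)) (measurableSet_singleton 1) measurableSet_Iic
  have hYker : ∀ᵐ ω ∂μ, Integrable Y (condExpKernel μ m' ω) := hYint.condExpKernel_ae
  have h1 := condExp_ae_eq_integral_condExpKernel hm' hTYint
  have h2 := condExp_ae_eq_integral_condExpKernel hm' hTint
  have h3 := condExp_ae_eq_integral_condExpKernel hm' hYint
  filter_upwards [h1, h2, h3, hq, hYker] with ω e1 e2 e3 eq eY
  rw [e1, e2, e3]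
  have hTmul : (fun y => T y * Y y) = A.indicator Y := by
    funext y
    rw [hTind]
    by_cases hy : y ∈ A
    · rw [Set.indicator_of_mem hy, Set.indicator_of_mem hy, one_mul]
    · rw [Set.indicator_of_notMem hy, Set.indicator_of_notMem hy, zero_mul]
  rw [hTmul, integral_indicator hA]
  rw [dr_measure_aux (condExpKernel μ m' ω) hA hY eY eq]
  congr 1
  rw [hTind, integral_indicator hA]
  simp [Measure.real]

end AuxLemmas

theorem dr_representation_mean
    {Ω : Type*} [MeasurableSpace Ω] [StandardBorelSpace Ω]
    (μ : Measure Ω) [IsProbabilityMeasure μ]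
    {𝒳 : Type*} [MeasurableSpace 𝒳]
    (Y T : Ω → ℝ) (X : Ω → 𝒳)
    (hY : Measurable Y) (hT : Measurable T) (hX : Measurable X)
    -- Y is square integrable
    (hYsq : MemLp Y 2 μ)
    -- T is a binary treatment indicator
    (hT01 : ∀ ω, T ω = 0 ∨ T ω = 1)
    -- unconfoundedness: T ⫫ Y | X
    (hunconf : CondIndepFun (MeasurableSpace.comap X inferInstance) hX.comap_le T Y μ)
    -- positivity of the propensity score π(X) := E[T | X]
    (c : ℝ) (hc : c ∈ Set.Ioo (0 : ℝ) 1)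
    (hpos : ∀ᵐ ω ∂μ,
      (μ[T | MeasurableSpace.comap X inferInstance]) ω ∈ Set.Ioo c (1 - c))
    -- working nuisance functions
    (πs ms : 𝒳 → ℝ) (hπs : Measurable πs) (hms : Measurable ms)
    (hπsRange : ∀ x, πs x ∈ Set.Ioo c (1 - c))
    (hmsInt : Integrable (fun ω => ms (X ω)) μ)
    -- double robustness: either π* = π a.s. or m* = m a.s. (not necessarily both)
    (hdr : ((fun ω => πs (X ω)) =ᵐ[μ] μ[T | MeasurableSpace.comap X inferInstance])
        ∨ ((fun ω => ms (X ω)) =ᵐ[μ] μ[Y | MeasurableSpace.comap X inferInstance])) :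
    (∫ ω, ms (X ω) ∂μ) + (∫ ω, (πs (X ω))⁻¹ * T ω * (Y ω - ms (X ω)) ∂μ)
      = ∫ ω, Y ω ∂μ := by
  have hc0 : (0 : ℝ) < c := hc.1
  have hm' := hX.comap_le
  have hYint : Integrable Y μ := hYsq.integrable one_le_two
  have hXm : Measurable[MeasurableSpace.comap X inferInstance] X :=
    measurable_iff_comap_le.mpr le_rfl
  have hgm : StronglyMeasurable[MeasurableSpace.comap X inferInstance]
      (fun ω => (πs (X ω))⁻¹) := ((hπs.inv).comp hXm).stronglyMeasurable
  have hmsm : StronglyMeasurable[MeasurableSpace.comap X inferInstance]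
      (fun ω => ms (X ω)) := (hms.comp hXm).stronglyMeasurable
  have hgbd : ∀ ω, ‖(πs (X ω))⁻¹‖ ≤ c⁻¹ := by
    intro ω
    have h1 := hπsRange (X ω)
    have hp : 0 < πs (X ω) := lt_trans hc0 h1.1
    rw [Real.norm_eq_abs, abs_of_pos (inv_pos.mpr hp)]
    exact inv_anti₀ hc0 h1.1.le
  have hTbd : ∀ ω, ‖T ω‖ ≤ 1 := by
    intro ω; rcases hT01 ω with h0 | h0 <;> simp [h0]
  have hTint : Integrable T μ :=
    (integrable_const (1 : ℝ)).mono' hT.aestronglyMeasurable (Filter.Eventually.of_forall hTbd)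
  have hf1 : Integrable (fun ω => Y ω - ms (X ω)) μ := hYint.sub hmsInt
  have hTf1 : Integrable (fun ω => T ω * (Y ω - ms (X ω))) μ :=
    hf1.bdd_mul hT.aestronglyMeasurable (Filter.Eventually.of_forall hTbd)
  have hG : Integrable (fun ω => (πs (X ω))⁻¹ * (T ω * (Y ω - ms (X ω)))) μ :=
    hTf1.bdd_mul ((hπs.inv).comp hX).aestronglyMeasurable (Filter.Eventually.of_forall hgbd)
  have hTYint : Integrable (fun ω => T ω * Y ω) μ :=
    hYint.bdd_mul hT.aestronglyMeasurable (Filter.Eventually.of_forall hTbd)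
  have hmsT : Integrable (fun ω => ms (X ω) * T ω) μ :=
    (hmsInt.bdd_mul hT.aestronglyMeasurable (Filter.Eventually.of_forall hTbd)).congr
      (Filter.Eventually.of_forall fun ω => mul_comm _ _)
  -- conditional expectation computations
  have hkey : μ[fun ω => T ω * Y ω | MeasurableSpace.comap X inferInstance] =ᵐ[μ]
      fun ω => (μ[T | MeasurableSpace.comap X inferInstance]) ω
        * (μ[Y | MeasurableSpace.comap X inferInstance]) ω :=
    dr_condexp_mul hm' hT hY hT01 hYint hunconf
  have hpull_ms : μ[(fun ω => ms (X ω)) * T | MeasurableSpace.comap X inferInstance] =ᵐ[μ]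
      (fun ω => ms (X ω)) * μ[T | MeasurableSpace.comap X inferInstance] :=
    condExp_mul_of_stronglyMeasurable_left hmsm hmsT hTint
  have hmsT' : Integrable ((fun ω => ms (X ω)) * T) μ := hmsT
  have hsplit : (fun ω => T ω * (Y ω - ms (X ω)))
      = (fun ω => T ω * Y ω) - (fun ω => ms (X ω)) * T := by
    funext ω; simp only [Pi.sub_apply, Pi.mul_apply]; ring
  have hsub : μ[fun ω => T ω * (Y ω - ms (X ω)) | MeasurableSpace.comap X inferInstance]
      =ᵐ[μ] μ[fun ω => T ω * Y ω | MeasurableSpace.comap X inferInstance]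
        - μ[(fun ω => ms (X ω)) * T | MeasurableSpace.comap X inferInstance] := by
    rw [hsplit]; exact condExp_sub hTYint hmsT' _
  have hpull_g : μ[(fun ω => (πs (X ω))⁻¹) * (fun ω => T ω * (Y ω - ms (X ω)))
      | MeasurableSpace.comap X inferInstance] =ᵐ[μ]
      (fun ω => (πs (X ω))⁻¹)
        * μ[fun ω => T ω * (Y ω - ms (X ω)) | MeasurableSpace.comap X inferInstance] :=
    condExp_mul_of_stronglyMeasurable_left hgm hG hTf1
  have hcond : μ[(fun ω => (πs (X ω))⁻¹) * (fun ω => T ω * (Y ω - ms (X ω)))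
      | MeasurableSpace.comap X inferInstance] =ᵐ[μ]
      fun ω => (πs (X ω))⁻¹ * ((μ[T | MeasurableSpace.comap X inferInstance]) ω
        * ((μ[Y | MeasurableSpace.comap X inferInstance]) ω - ms (X ω))) := by
    filter_upwards [hpull_g, hsub, hkey, hpull_ms] with ω e1 e2 e3 e4
    simp only [Pi.mul_apply, Pi.sub_apply] at e1 e2 e3 e4 ⊢
    rw [e1, e2, e3, e4]; ring
  have hint_eq : ∫ ω, (πs (X ω))⁻¹ * T ω * (Y ω - ms (X ω)) ∂μ
      = ∫ ω, (πs (X ω))⁻¹ * ((μ[T | MeasurableSpace.comap X inferInstance]) ω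
        * ((μ[Y | MeasurableSpace.comap X inferInstance]) ω - ms (X ω))) ∂μ := by
    have h0 : (fun ω => (πs (X ω))⁻¹ * T ω * (Y ω - ms (X ω)))
        = (fun ω => (πs (X ω))⁻¹) * (fun ω => T ω * (Y ω - ms (X ω))) := by
      funext ω; simp only [Pi.mul_apply]; ring
    rw [h0, ← integral_condExp hm']
    exact integral_congr_ae hcond
  rcases hdr with hπeq | hmeq
  · -- propensity score correctly specified
    have he : (fun ω => (πs (X ω))⁻¹ * ((μ[T | MeasurableSpace.comap X inferInstance]) ω
        * ((μ[Y | MeasurableSpace.comap X inferInstance]) ω - ms (X ω)))) =ᵐ[μ]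
        fun ω => (μ[Y | MeasurableSpace.comap X inferInstance]) ω - ms (X ω) := by
      filter_upwards [hπeq, hpos] with ω e1 e2
      rw [← e1]
      exact inv_mul_cancel_left₀ (ne_of_gt (lt_trans hc0 (hπsRange (X ω)).1)) _
    rw [hint_eq, integral_congr_ae he, integral_sub integrable_condExp hmsInt,
      integral_condExp hm']
    ring
  · -- outcome regression correctly specified
    have he : (fun ω => (πs (X ω))⁻¹ * ((μ[T | MeasurableSpace.comap X inferInstance]) ω
        * ((μ[Y | MeasurableSpace.comap X inferInstance]) ω - ms (X ω)))) =ᵐ[μ]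
        (0 : Ω → ℝ) := by
      filter_upwards [hmeq] with ω e1
      simp [← e1]
    have hms_eq : ∫ ω, ms (X ω) ∂μ = ∫ ω, Y ω ∂μ := by
      rw [integral_congr_ae hmeq]; exact integral_condExp hm'
    rw [hint_eq, integral_congr_ae he]
    simp only [Pi.zero_apply, integral_zero, add_zero, hms_eq]
end

section
/- (Efficiency gain of the SS ATE estimator, equation (15)) Let 𝒢 be a sub-σ-algebra of the σ-algebra generated by X and set m*(X) := E[Y | 𝒢]. With λ²_SS := Var(π(X)^{−1}T(Y − m*(X))) and λ²_SUP := Var(π(X)^{−1}T(Y − m*(X)) + m*(X)), one has λ²_SS = λ²_SUP − 2E[m*(X)(Y − μ0)] + Var(m*(X)) = λ²_SUP − Var(m*(X)); in particular λ²_SS ≤ λ²_SUP. -/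
/-!
Statement 6 (efficiency gain of the SS ATE estimator, equation (15)):
with `𝒢` a sub-σ-algebra of `σ(X)` and `m* := E[Y | 𝒢]`,
`λ²_SS = λ²_SUP − 2E[m*(X)(Y − μ0)] + Var(m*(X)) = λ²_SUP − Var(m*(X)) ≤ λ²_SUP`,
where `λ²_SS := Var(π(X)⁻¹T(Y − m*(X)))` and
`λ²_SUP := Var(π(X)⁻¹T(Y − m*(X)) + m*(X))`.
-/

open MeasureTheory ProbabilityTheory


open MeasureTheory ProbabilityTheory MeasurableSpace Set

section Aux

variable {Ω : Type*} {m : MeasurableSpace Ω} [mΩ : MeasurableSpace Ω] [StandardBorelSpace Ω]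
  {μ : Measure Ω} [IsProbabilityMeasure μ]

set_option linter.unusedSectionVars false

/-- Product of two L² functions is integrable. -/
lemma integrable_mul_of_memL2 {f g : Ω → ℝ} (hf : MemLp f 2 μ) (hg : MemLp g 2 μ) :
    Integrable (fun ω => f ω * g ω) μ := by
  refine Integrable.mono' (((hf.integrable_sq.add hg.integrable_sq).const_mul (1/2 : ℝ)))
    (hf.aestronglyMeasurable.mul hg.aestronglyMeasurable) ?_
  filter_upwards with ω
  simp only [Pi.add_apply]
  rw [Real.norm_eq_abs, abs_mul]
  nlinarith [sq_nonneg (|f ω| - |g ω|), sq_abs (f ω), sq_abs (g ω), abs_nonneg (f ω),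
    abs_nonneg (g ω)]

/-- The conditional expectation of an L² function is L². -/
lemma memL2_condexp (hm : m ≤ mΩ) {f : Ω → ℝ}
    (hfm : Measurable f) (hf : MemLp f 2 μ) :
    MemLp (μ[f|m]) 2 μ := by
  have hfint : Integrable f μ := hf.integrable one_le_two
  have hsq : Integrable (fun ω => f ω ^ 2) μ := hf.integrable_sq
  have h1 : μ[f|m] =ᵐ[μ] fun ω => ∫ y, f y ∂(condExpKernel μ m ω) :=
    condExp_ae_eq_integral_condExpKernel hm hfint
  have h2 : μ[fun ω => f ω ^ 2|m] =ᵐ[μ] fun ω => ∫ y, f y ^ 2 ∂(condExpKernel μ m ω) :=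
    condExp_ae_eq_integral_condExpKernel hm hsq
  have h3 : ∀ᵐ ω ∂μ, Integrable (fun y => f y ^ 2) (condExpKernel μ m ω) :=
    hsq.condExpKernel_ae
  have hbd : ∀ᵐ ω ∂μ, ((μ[f|m]) ω) ^ 2 ≤ (μ[fun ω => f ω ^ 2|m]) ω := by
    filter_upwards [h1, h2, h3] with ω hω1 hω2 hω3
    haveI : IsProbabilityMeasure (condExpKernel μ m ω) := by infer_instance
    have hfL2 : MemLp f 2 (condExpKernel μ m ω) :=
      (memLp_two_iff_integrable_sq hfm.stronglyMeasurable.aestronglyMeasurable).2 hω3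
    have := variance_nonneg f (condExpKernel μ m ω)
    rw [variance_eq_sub hfL2] at this
    rw [hω1, hω2]
    simpa using this
  refine (memLp_two_iff_integrable_sq
    (stronglyMeasurable_condExp.mono hm).aestronglyMeasurable).2 ?_
  refine Integrable.mono' (integrable_condExp (f := fun ω => f ω ^ 2) (m := m))
    ((stronglyMeasurable_condExp.mono hm).aestronglyMeasurable.pow 2) ?_
  filter_upwards [hbd] with ω hω
  rw [Real.norm_eq_abs, abs_of_nonneg (sq_nonneg _)]
  exact hω

/-- For conditionally independent `T` (bounded) and `Y` (integrable),
`E[T Y | m] = E[T | m] E[Y | m]` a.e. -/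
lemma condexp_mul_of_condIndepFun (hm : m ≤ mΩ)
    {T Y : Ω → ℝ} (hT : Measurable T) (hY : Measurable Y)
    (hTbd : ∀ ω, |T ω| ≤ 1) (hYint : Integrable Y μ)
    (hindep : CondIndepFun m hm T Y μ) :
    μ[fun ω => T ω * Y ω|m] =ᵐ[μ] fun ω => (μ[T|m]) ω * (μ[Y|m]) ω := by
  set κ := condExpKernel μ m with hκ
  have hTint : Integrable T μ := by
    refine Integrable.mono' (integrable_const 1) hT.stronglyMeasurable.aestronglyMeasurable ?_
    filter_upwards with ω
    rw [Real.norm_eq_abs]; exact hTbd ω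
  have hTYint : Integrable (fun ω => T ω * Y ω) μ := by
    refine Integrable.mono' hYint.norm (hT.stronglyMeasurable.aestronglyMeasurable.mul
      hY.stronglyMeasurable.aestronglyMeasurable) ?_
    filter_upwards with ω
    rw [Real.norm_eq_abs, abs_mul, Real.norm_eq_abs]
    calc |T ω| * |Y ω| ≤ 1 * |Y ω| :=
          mul_le_mul_of_nonneg_right (hTbd ω) (abs_nonneg _)
      _ = |Y ω| := one_mul _
  have hae : ∀ᵐ ω ∂μ, ∀ q r : ℚ,
      κ ω (T ⁻¹' Iic (q : ℝ) ∩ Y ⁻¹' Iic (r : ℝ))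
        = κ ω (T ⁻¹' Iic (q : ℝ)) * κ ω (Y ⁻¹' Iic (r : ℝ)) := by
    rw [ae_all_iff]; intro q; rw [ae_all_iff]; intro r
    refine ae_of_ae_trim hm ?_
    exact hindep (T ⁻¹' Iic (q : ℝ)) (Y ⁻¹' Iic (r : ℝ))
      ⟨Iic (q : ℝ), measurableSet_Iic, rfl⟩ ⟨Iic (r : ℝ), measurableSet_Iic, rfl⟩
  have hTκ : ∀ᵐ ω ∂μ, Integrable T (κ ω) := hTint.condExpKernel_ae
  have hYκ : ∀ᵐ ω ∂μ, Integrable Y (κ ω) := hYint.condExpKernel_ae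
  have hSgen : (Real.measurableSpace : MeasurableSpace ℝ)
      = .generateFrom (⋃ a : ℚ, {Iic (a : ℝ)}) :=
    BorelSpace.measurable_eq.trans Real.borel_eq_generateFrom_Iic_rat
  have hmul : ∀ᵐ ω ∂μ, ∫ y, T y * Y y ∂(κ ω)
      = (∫ y, T y ∂(κ ω)) * ∫ y, Y y ∂(κ ω) := by
    filter_upwards [hae, hTκ, hYκ] with ω hω hTω hYω
    haveI : IsProbabilityMeasure (κ ω) := by infer_instance
    have hindepω : IndepFun T Y (κ ω) := by
      refine IndepSets.indep hT.comap_le hY.comap_le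
        (Real.isPiSystem_Iic_rat.comap T) (Real.isPiSystem_Iic_rat.comap Y) ?_ ?_ ?_
      · conv_lhs => rw [hSgen]
        rw [comap_generateFrom]
        rfl
      · conv_lhs => rw [hSgen]
        rw [comap_generateFrom]
        rfl
      · rintro _ _ ⟨s, hs, rfl⟩ ⟨t, ht, rfl⟩
        simp only [mem_iUnion, mem_singleton_iff] at hs ht
        obtain ⟨q, rfl⟩ := hs
        obtain ⟨r, rfl⟩ := ht
        exact Filter.Eventually.of_forall fun _ => hω q r
    have h := hindepω.integral_mul_eq_mul_integral hTω.aestronglyMeasurable hYω.aestronglyMeasurable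
    simpa [Pi.mul_apply] using h
  calc μ[fun ω => T ω * Y ω|m]
      =ᵐ[μ] fun ω => ∫ y, T y * Y y ∂(κ ω) :=
        condExp_ae_eq_integral_condExpKernel hm hTYint
    _ =ᵐ[μ] fun ω => (μ[T|m]) ω * (μ[Y|m]) ω := by
        filter_upwards [hmul, (condExp_ae_eq_integral_condExpKernel hm hTint).symm,
          (condExp_ae_eq_integral_condExpKernel hm hYint).symm] with ω h1 h2 h3
        rw [h1, ← h2, ← h3]

end Aux

theorem ss_ate_abstract
    {Ω : Type*} {𝒢 mX mΩ : MeasurableSpace Ω} [StandardBorelSpace Ω]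
    (μ : Measure Ω) [IsProbabilityMeasure μ]
    (Y T : Ω → ℝ)
    (hY : Measurable Y) (hT : Measurable T)
    (hYsq : MemLp Y 2 μ)
    (hT01 : ∀ ω, T ω = 0 ∨ T ω = 1)
    (hmXle : mX ≤ mΩ)
    (hunconf : CondIndepFun mX hmXle T Y μ)
    (c : ℝ) (hc : c ∈ Set.Ioo (0 : ℝ) 1)
    (hpos : ∀ᵐ ω ∂μ, (μ[T | mX]) ω ∈ Set.Ioo c (1 - c))
    (h𝒢 : 𝒢 ≤ mX) :
    (variance (fun ω =>
        ((μ[T | mX]) ω)⁻¹ * T ω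
          * (Y ω - (μ[Y | 𝒢]) ω)) μ
      = variance (fun ω =>
          ((μ[T | mX]) ω)⁻¹ * T ω
            * (Y ω - (μ[Y | 𝒢]) ω) + (μ[Y | 𝒢]) ω) μ
        - 2 * ∫ ω, (μ[Y | 𝒢]) ω * (Y ω - ∫ ω', Y ω' ∂μ) ∂μ
        + variance (fun ω => (μ[Y | 𝒢]) ω) μ)
    ∧ (variance (fun ω =>
        ((μ[T | mX]) ω)⁻¹ * T ω
          * (Y ω - (μ[Y | 𝒢]) ω)) μ
      = variance (fun ω =>
          ((μ[T | mX]) ω)⁻¹ * T ω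
            * (Y ω - (μ[Y | 𝒢]) ω) + (μ[Y | 𝒢]) ω) μ
        - variance (fun ω => (μ[Y | 𝒢]) ω) μ)
    ∧ variance (fun ω =>
        ((μ[T | mX]) ω)⁻¹ * T ω
          * (Y ω - (μ[Y | 𝒢]) ω)) μ
      ≤ variance (fun ω =>
          ((μ[T | mX]) ω)⁻¹ * T ω
            * (Y ω - (μ[Y | 𝒢]) ω) + (μ[Y | 𝒢]) ω) μ := by
  classical
  have hc0 : (0 : ℝ) < c := hc.1
  have h𝒢' : 𝒢 ≤ mΩ := h𝒢.trans hmXle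
  set π := μ[T|mX] with hπdef
  set mstar := μ[Y|𝒢] with hmstardef
  -- basic facts
  have hT1 : ∀ ω, |T ω| ≤ 1 := by
    intro ω; rcases hT01 ω with h | h <;> simp [h]
  have hYint : Integrable Y μ := hYsq.integrable one_le_two
  have hTint : Integrable T μ := by
    refine Integrable.mono' (integrable_const 1) hT.stronglyMeasurable.aestronglyMeasurable ?_
    filter_upwards with ω
    rw [Real.norm_eq_abs]; exact hT1 ω
  have hm2 : MemLp mstar 2 μ := memL2_condexp h𝒢' hY hYsq
  have hmint : Integrable mstar μ := hm2.integrable one_le_two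
  have hE2 : MemLp (μ[Y|mX]) 2 μ := memL2_condexp hmXle hY hYsq
  have hEint : Integrable (μ[Y|mX]) μ := hE2.integrable one_le_two
  have hmsm𝒢 : StronglyMeasurable[𝒢] mstar := stronglyMeasurable_condExp
  have hmsmX : StronglyMeasurable[mX] mstar := hmsm𝒢.mono h𝒢
  have hmsm : StronglyMeasurable[mΩ] mstar := hmsmX.mono hmXle
  have hπsmX : StronglyMeasurable[mX] π := stronglyMeasurable_condExp
  have hπsm : StronglyMeasurable[mΩ] π := hπsmX.mono hmXle
  have hYm2 : MemLp (fun ω => Y ω - mstar ω) 2 μ := hYsq.sub hm2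
  have hYmint : Integrable (fun ω => Y ω - mstar ω) μ := hYm2.integrable one_le_two
  have hπpos : ∀ᵐ ω ∂μ, 0 < π ω := by
    filter_upwards [hpos] with ω h using hc0.trans h.1
  have hπinv : ∀ᵐ ω ∂μ, |(π ω)⁻¹| ≤ c⁻¹ := by
    filter_upwards [hpos] with ω h
    rw [abs_of_nonneg (inv_nonneg.2 (hc0.trans h.1).le)]
    exact inv_anti₀ hc0 h.1.le
  -- L² membership of W
  have hπinvsmX : StronglyMeasurable[mX] (fun ω => (π ω)⁻¹) :=
    hπsmX.measurable.inv.stronglyMeasurable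
  have hπinvmsmX : StronglyMeasurable[mX] (fun ω => (π ω)⁻¹ * mstar ω) :=
    hπinvsmX.mul hmsmX
  have hWsm : StronglyMeasurable[mΩ] (fun ω => (π ω)⁻¹ * T ω * (Y ω - mstar ω)) :=
    (((hπinvsmX.mono hmXle).mul hT.stronglyMeasurable).mul
      (hY.stronglyMeasurable.sub hmsm))
  have hW2 : MemLp (fun ω => (π ω)⁻¹ * T ω * (Y ω - mstar ω)) 2 μ := by
    refine MemLp.of_le (hYm2.const_mul c⁻¹) hWsm.aestronglyMeasurable ?_
    filter_upwards [hπinv] with ω h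
    rw [Real.norm_eq_abs, Real.norm_eq_abs, abs_mul, abs_mul, abs_mul]
    have h1 : |(π ω)⁻¹| * |T ω| ≤ c⁻¹ * 1 :=
      mul_le_mul h (hT1 ω) (abs_nonneg _) (inv_nonneg.2 hc0.le)
    calc |(π ω)⁻¹| * |T ω| * |Y ω - mstar ω|
        ≤ (c⁻¹ * 1) * |Y ω - mstar ω| :=
          mul_le_mul_of_nonneg_right h1 (abs_nonneg _)
      _ = |c⁻¹| * |Y ω - mstar ω| := by
          rw [mul_one, abs_of_nonneg (inv_nonneg.2 hc0.le)]
  have hWint : Integrable (fun ω => (π ω)⁻¹ * T ω * (Y ω - mstar ω)) μ :=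
    hW2.integrable one_le_two
  have hWm_int : Integrable (fun ω => ((π ω)⁻¹ * T ω * (Y ω - mstar ω)) * mstar ω) μ :=
    integrable_mul_of_memL2 hW2 hm2
  have hg_int : Integrable (fun ω => T ω * (Y ω - mstar ω)) μ := by
    refine Integrable.mono' hYmint.norm (hT.stronglyMeasurable.aestronglyMeasurable.mul
      (hY.stronglyMeasurable.sub hmsm).aestronglyMeasurable) ?_
    filter_upwards with ω
    rw [Real.norm_eq_abs, abs_mul, Real.norm_eq_abs]
    calc |T ω| * |Y ω - mstar ω| ≤ 1 * |Y ω - mstar ω| :=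
          mul_le_mul_of_nonneg_right (hT1 ω) (abs_nonneg _)
      _ = |Y ω - mstar ω| := one_mul _
  -- conditional expectation identities
  have hprod : μ[fun ω => T ω * Y ω|mX] =ᵐ[μ] fun ω => π ω * (μ[Y|mX]) ω :=
    condexp_mul_of_condIndepFun hmXle hT hY hT1 hYint hunconf
  have hTY_int : Integrable (fun ω => T ω * Y ω) μ := by
    refine Integrable.mono' hYint.norm (hT.stronglyMeasurable.aestronglyMeasurable.mul
      hY.stronglyMeasurable.aestronglyMeasurable) ?_
    filter_upwards with ω
    rw [Real.norm_eq_abs, abs_mul, Real.norm_eq_abs]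
    calc |T ω| * |Y ω| ≤ 1 * |Y ω| :=
          mul_le_mul_of_nonneg_right (hT1 ω) (abs_nonneg _)
      _ = |Y ω| := one_mul _
  have hTm_int : Integrable (fun ω => mstar ω * T ω) μ := by
    refine Integrable.mono' hmint.norm (hmsm.aestronglyMeasurable.mul
      hT.stronglyMeasurable.aestronglyMeasurable) ?_
    filter_upwards with ω
    rw [Real.norm_eq_abs, abs_mul, Real.norm_eq_abs, mul_comm]
    calc |T ω| * |mstar ω| ≤ 1 * |mstar ω| :=
          mul_le_mul_of_nonneg_right (hT1 ω) (abs_nonneg _)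
      _ = |mstar ω| := one_mul _
  have hTm : μ[fun ω => mstar ω * T ω|mX] =ᵐ[μ] fun ω => mstar ω * π ω :=
    condExp_mul_of_stronglyMeasurable_left hmsmX hTm_int hTint
  have hsub : (fun ω => T ω * (Y ω - mstar ω))
      = (fun ω => T ω * Y ω) - (fun ω => mstar ω * T ω) := by
    funext ω; simp only [Pi.sub_apply]; ring
  have hkey : μ[fun ω => T ω * (Y ω - mstar ω)|mX]
      =ᵐ[μ] fun ω => π ω * ((μ[Y|mX]) ω - mstar ω) := by
    rw [hsub]
    refine (condExp_sub hTY_int hTm_int mX).trans ?_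
    filter_upwards [hprod, hTm] with ω h1 h2
    simp only [Pi.sub_apply]
    rw [h1, h2]
    ring
  -- master integral identity
  have master : ∀ ψ : Ω → ℝ, StronglyMeasurable[mX] ψ →
      Integrable (fun ω => ψ ω * (T ω * (Y ω - mstar ω))) μ →
      ∫ ω, ψ ω * (T ω * (Y ω - mstar ω)) ∂μ
        = ∫ ω, ψ ω * (π ω * ((μ[Y|mX]) ω - mstar ω)) ∂μ := by
    intro ψ hψ hint1
    have h1 : μ[fun ω => ψ ω * (T ω * (Y ω - mstar ω))|mX]
        =ᵐ[μ] fun ω => ψ ω * (μ[fun ω' => T ω' * (Y ω' - mstar ω')|mX]) ω :=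
      condExp_mul_of_stronglyMeasurable_left hψ hint1 hg_int
    calc ∫ ω, ψ ω * (T ω * (Y ω - mstar ω)) ∂μ
        = ∫ ω, (μ[fun ω' => ψ ω' * (T ω' * (Y ω' - mstar ω'))|mX]) ω ∂μ :=
          (integral_condExp hmXle).symm
      _ = ∫ ω, ψ ω * (π ω * ((μ[Y|mX]) ω - mstar ω)) ∂μ := by
          refine integral_congr_ae ?_
          filter_upwards [h1, hkey] with ω h1ω h2ω
          rw [h1ω, h2ω]
  -- first moment: ∫ W = 0
  have hEY : ∫ ω, (μ[Y|mX]) ω ∂μ = ∫ ω, Y ω ∂μ := integral_condExp hmXle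
  have hEm : ∫ ω, mstar ω ∂μ = ∫ ω, Y ω ∂μ := integral_condExp h𝒢'
  have IW : ∫ ω, (π ω)⁻¹ * T ω * (Y ω - mstar ω) ∂μ = 0 := by
    have e1 : (fun ω => (π ω)⁻¹ * T ω * (Y ω - mstar ω))
        = fun ω => (π ω)⁻¹ * (T ω * (Y ω - mstar ω)) := by funext ω; ring
    have hmaster : ∫ ω, (π ω)⁻¹ * (T ω * (Y ω - mstar ω)) ∂μ
        = ∫ ω, (π ω)⁻¹ * (π ω * ((μ[Y|mX]) ω - mstar ω)) ∂μ :=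
      master _ hπinvsmX (e1 ▸ hWint)
    rw [e1, hmaster]
    have e2 : ∫ ω, (π ω)⁻¹ * (π ω * ((μ[Y|mX]) ω - mstar ω)) ∂μ
        = ∫ ω, ((μ[Y|mX]) ω - mstar ω) ∂μ := by
      refine integral_congr_ae ?_
      filter_upwards [hπpos] with ω h
      rw [inv_mul_cancel_left₀ h.ne']
    rw [e2, integral_sub hEint hmint, hEY, hEm, sub_self]
  -- products with mstar
  have hmY_int : Integrable (fun ω => mstar ω * Y ω) μ := integrable_mul_of_memL2 hm2 hYsq
  have hmE : ∫ ω, mstar ω * (μ[Y|mX]) ω ∂μ = ∫ ω, mstar ω * Y ω ∂μ := by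
    have h : μ[fun ω => mstar ω * Y ω|mX] =ᵐ[μ] fun ω => mstar ω * (μ[Y|mX]) ω :=
      condExp_mul_of_stronglyMeasurable_left hmsmX hmY_int hYint
    rw [← integral_condExp hmXle (f := fun ω => mstar ω * Y ω)]
    exact integral_congr_ae h.symm
  have hmm : ∫ ω, mstar ω * Y ω ∂μ = ∫ ω, mstar ω * mstar ω ∂μ := by
    have h : μ[fun ω => mstar ω * Y ω|𝒢] =ᵐ[μ] fun ω => mstar ω * mstar ω :=
      condExp_mul_of_stronglyMeasurable_left hmsm𝒢 hmY_int hYint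
    rw [← integral_condExp h𝒢' (f := fun ω => mstar ω * Y ω)]
    exact integral_congr_ae h
  have hmm_int : Integrable (fun ω => mstar ω * mstar ω) μ := integrable_mul_of_memL2 hm2 hm2
  have hmE_int : Integrable (fun ω => mstar ω * (μ[Y|mX]) ω) μ :=
    integrable_mul_of_memL2 hm2 hE2
  -- second moment: ∫ W·mstar = 0
  have IWm : ∫ ω, ((π ω)⁻¹ * T ω * (Y ω - mstar ω)) * mstar ω ∂μ = 0 := by
    have e1 : (fun ω => ((π ω)⁻¹ * T ω * (Y ω - mstar ω)) * mstar ω)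
        = fun ω => ((π ω)⁻¹ * mstar ω) * (T ω * (Y ω - mstar ω)) := by funext ω; ring
    have hmaster : ∫ ω, ((π ω)⁻¹ * mstar ω) * (T ω * (Y ω - mstar ω)) ∂μ
        = ∫ ω, ((π ω)⁻¹ * mstar ω) * (π ω * ((μ[Y|mX]) ω - mstar ω)) ∂μ :=
      master _ hπinvmsmX (e1 ▸ hWm_int)
    rw [e1, hmaster]
    have e2 : ∫ ω, ((π ω)⁻¹ * mstar ω) * (π ω * ((μ[Y|mX]) ω - mstar ω)) ∂μ
        = ∫ ω, (mstar ω * (μ[Y|mX]) ω - mstar ω * mstar ω) ∂μ := by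
      refine integral_congr_ae ?_
      filter_upwards [hπpos] with ω h
      field_simp
    rw [e2, integral_sub hmE_int hmm_int, hmE, hmm, sub_self]
  -- variance computations
  have hsum2 : MemLp (fun ω => (π ω)⁻¹ * T ω * (Y ω - mstar ω) + mstar ω) 2 μ := hW2.add hm2
  have hVW := variance_eq_sub hW2
  have hVs := variance_eq_sub hsum2
  have hVm := variance_eq_sub hm2
  simp only [Pi.pow_apply] at hVW hVs hVm
  have expand : ∫ ω, ((π ω)⁻¹ * T ω * (Y ω - mstar ω) + mstar ω) ^ 2 ∂μ
      = (∫ ω, ((π ω)⁻¹ * T ω * (Y ω - mstar ω)) ^ 2 ∂μ)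
        + 2 * (∫ ω, ((π ω)⁻¹ * T ω * (Y ω - mstar ω)) * mstar ω ∂μ)
        + ∫ ω, (mstar ω) ^ 2 ∂μ := by
    have e : (fun ω => ((π ω)⁻¹ * T ω * (Y ω - mstar ω) + mstar ω) ^ 2)
        = fun ω => ((π ω)⁻¹ * T ω * (Y ω - mstar ω)) ^ 2
            + (2 * (((π ω)⁻¹ * T ω * (Y ω - mstar ω)) * mstar ω) + (mstar ω) ^ 2) := by
      funext ω; ring
    have i2 : Integrable (fun ω => 2 * (((π ω)⁻¹ * T ω * (Y ω - mstar ω)) * mstar ω)) μ :=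
      hWm_int.const_mul 2
    have i3 : Integrable (fun ω => (mstar ω) ^ 2) μ := hm2.integrable_sq
    have i23 : Integrable (fun ω => 2 * (((π ω)⁻¹ * T ω * (Y ω - mstar ω)) * mstar ω)
        + (mstar ω) ^ 2) μ := i2.add i3
    rw [e, integral_add hW2.integrable_sq i23, integral_add i2 i3, integral_const_mul]
    ring
  have sumint : ∫ ω, ((π ω)⁻¹ * T ω * (Y ω - mstar ω) + mstar ω) ∂μ
      = (∫ ω, (π ω)⁻¹ * T ω * (Y ω - mstar ω) ∂μ) + ∫ ω, mstar ω ∂μ :=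
    integral_add hWint hmint
  have hmsq : ∫ ω, mstar ω * Y ω ∂μ = ∫ ω, (mstar ω) ^ 2 ∂μ := by
    rw [hmm]; congr 1; funext ω; ring
  -- the term 2 E[m (Y - μ0)]
  have hterm : ∫ ω, mstar ω * (Y ω - ∫ ω', Y ω' ∂μ) ∂μ
      = (∫ ω, (mstar ω) ^ 2 ∂μ) - (∫ ω, mstar ω ∂μ) ^ 2 := by
    have e : (fun ω => mstar ω * (Y ω - ∫ ω', Y ω' ∂μ))
        = fun ω => mstar ω * Y ω - (∫ ω', Y ω' ∂μ) * mstar ω := by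
      funext ω; ring
    rw [e, integral_sub hmY_int (hmint.const_mul _), integral_const_mul, hmsq, hEm]
    ring
  refine ⟨?_, ?_, ?_⟩
  · rw [hVW, hVs, hVm, expand, sumint, IW, IWm, hterm]
    ring
  · rw [hVW, hVs, hVm, expand, sumint, IW, IWm]
    ring
  · rw [hVW, hVs, expand, sumint, IW, IWm]
    have h := variance_nonneg mstar μ
    rw [hVm] at h
    nlinarith [h]


theorem ss_ate_efficiency_gain
    {Ω : Type*} [MeasurableSpace Ω] [StandardBorelSpace Ω]
    (μ : Measure Ω) [IsProbabilityMeasure μ]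
    {𝒳 : Type*} [MeasurableSpace 𝒳]
    (Y T : Ω → ℝ) (X : Ω → 𝒳)
    (hY : Measurable Y) (hT : Measurable T) (hX : Measurable X)
    -- Y is square integrable
    (hYsq : MemLp Y 2 μ)
    -- T is a binary treatment indicator
    (hT01 : ∀ ω, T ω = 0 ∨ T ω = 1)
    -- unconfoundedness: T ⫫ Y | X
    (hunconf : CondIndepFun (MeasurableSpace.comap X inferInstance) hX.comap_le T Y μ)
    -- positivity of the propensity score π(X) := E[T | X]
    (c : ℝ) (hc : c ∈ Set.Ioo (0 : ℝ) 1)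
    (hpos : ∀ᵐ ω ∂μ,
      (μ[T | MeasurableSpace.comap X inferInstance]) ω ∈ Set.Ioo c (1 - c))
    -- 𝒢 is a sub-σ-algebra of σ(X); m*(X) := E[Y | 𝒢]
    (𝒢 : MeasurableSpace Ω) (h𝒢 : 𝒢 ≤ MeasurableSpace.comap X inferInstance) :
    (variance (fun ω =>
        ((μ[T | MeasurableSpace.comap X inferInstance]) ω)⁻¹ * T ω
          * (Y ω - (μ[Y | 𝒢]) ω)) μ
      = variance (fun ω =>
          ((μ[T | MeasurableSpace.comap X inferInstance]) ω)⁻¹ * T ω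
            * (Y ω - (μ[Y | 𝒢]) ω) + (μ[Y | 𝒢]) ω) μ
        - 2 * ∫ ω, (μ[Y | 𝒢]) ω * (Y ω - ∫ ω', Y ω' ∂μ) ∂μ
        + variance (fun ω => (μ[Y | 𝒢]) ω) μ)
    ∧ (variance (fun ω =>
        ((μ[T | MeasurableSpace.comap X inferInstance]) ω)⁻¹ * T ω
          * (Y ω - (μ[Y | 𝒢]) ω)) μ
      = variance (fun ω =>
          ((μ[T | MeasurableSpace.comap X inferInstance]) ω)⁻¹ * T ω
            * (Y ω - (μ[Y | 𝒢]) ω) + (μ[Y | 𝒢]) ω) μ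
        - variance (fun ω => (μ[Y | 𝒢]) ω) μ)
    ∧ variance (fun ω =>
        ((μ[T | MeasurableSpace.comap X inferInstance]) ω)⁻¹ * T ω
          * (Y ω - (μ[Y | 𝒢]) ω)) μ
      ≤ variance (fun ω =>
          ((μ[T | MeasurableSpace.comap X inferInstance]) ω)⁻¹ * T ω
            * (Y ω - (μ[Y | 𝒢]) ω) + (μ[Y | 𝒢]) ω) μ :=
  ss_ate_abstract μ Y T hY hT hYsq hT01 hX.comap_le hunconf c hc hpos h𝒢
end

section
/- (QTE efficiency gain) Let 𝒢 be a sub-σ-algebra of the σ-algebra generated by X and set φ*(X,θ0) := E[ψ(Y,θ0) | 𝒢]. With σ²_SS := Var(π(X)^{−1}T(ψ(Y,θ0) − φ*(X,θ0))) and σ²_SUP := Var(π(X)^{−1}T(φ*(X,θ0) − ψ(Y,θ0)) − φ*(X,θ0)), one has σ²_SUP − σ²_SS = 2E[φ*(X,θ0)ψ(Y,θ0)] − Var(φ*(X,θ0)) = E[φ*(X,θ0)²] ≥ 0. -/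
open MeasureTheory ProbabilityTheory

theorem aux_gain {Ω : Type*} {mΩ : MeasurableSpace Ω}
    (μ : Measure Ω) [IsProbabilityMeasure μ]
    (T ψ : Ω → ℝ) (m 𝒢 : MeasurableSpace Ω) (hm : m ≤ mΩ) (h𝒢m : 𝒢 ≤ m)
    (hT : Measurable[mΩ] T) (hψ : Measurable[mΩ] ψ)
    (hTb : ∀ ω, |T ω| ≤ 1) (hψb : ∀ ω, |ψ ω| ≤ 1)
    (c : ℝ) (hc : 0 < c)
    (hpos : ∀ᵐ ω ∂μ, c < (μ[T|m]) ω)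
    (hmean : ∫ ω, ψ ω ∂μ = 0)
    (hfact : (μ[fun ω => T ω * ψ ω|m]) =ᵐ[μ] fun ω => (μ[T|m]) ω * (μ[ψ|m]) ω) :
    (variance (fun ω => ((μ[T|m]) ω)⁻¹ * T ω * ((μ[ψ|𝒢]) ω - ψ ω) - (μ[ψ|𝒢]) ω) μ
       - variance (fun ω => ((μ[T|m]) ω)⁻¹ * T ω * (ψ ω - (μ[ψ|𝒢]) ω)) μ
       = 2 * ∫ ω, (μ[ψ|𝒢]) ω * ψ ω ∂μ - variance (fun ω => (μ[ψ|𝒢]) ω) μ)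
    ∧ (variance (fun ω => ((μ[T|m]) ω)⁻¹ * T ω * ((μ[ψ|𝒢]) ω - ψ ω) - (μ[ψ|𝒢]) ω) μ
       - variance (fun ω => ((μ[T|m]) ω)⁻¹ * T ω * (ψ ω - (μ[ψ|𝒢]) ω)) μ
       = ∫ ω, ((μ[ψ|𝒢]) ω) ^ 2 ∂μ)
    ∧ 0 ≤ variance (fun ω => ((μ[T|m]) ω)⁻¹ * T ω * ((μ[ψ|𝒢]) ω - ψ ω) - (μ[ψ|𝒢]) ω) μ
       - variance (fun ω => ((μ[T|m]) ω)⁻¹ * T ω * (ψ ω - (μ[ψ|𝒢]) ω)) μ := by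
  have hm' : 𝒢 ≤ mΩ := h𝒢m.trans hm
  set π : Ω → ℝ := μ[T|m] with hπdef
  set η : Ω → ℝ := μ[ψ|m] with hηdef
  set φ : Ω → ℝ := μ[ψ|𝒢] with hφdef
  -- measurability
  have hπsm : StronglyMeasurable[m] π := stronglyMeasurable_condExp
  have hηsm : StronglyMeasurable[m] η := stronglyMeasurable_condExp
  have hφsm𝒢 : StronglyMeasurable[𝒢] φ := stronglyMeasurable_condExp
  have hφsmm : StronglyMeasurable[m] φ := hφsm𝒢.mono h𝒢m
  have hπme : Measurable[mΩ] π := (hπsm.mono hm).measurable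
  have hηme : Measurable[mΩ] η := (hηsm.mono hm).measurable
  have hφme : Measurable[mΩ] φ := (hφsm𝒢.mono hm').measurable
  have hgsm : StronglyMeasurable[m] (fun ω => (π ω)⁻¹) :=
    (hπsm.measurable.inv).stronglyMeasurable
  have hg'sm : StronglyMeasurable[m] (fun ω => (π ω)⁻¹ * φ ω) :=
    ((hπsm.measurable.inv).stronglyMeasurable).mul hφsmm
  -- bounds
  have hφb : ∀ᵐ ω ∂μ, |φ ω| ≤ 1 := by
    have h := ae_bdd_condExp_of_ae_bdd (m := 𝒢) (μ := μ) (R := 1) (f := ψ)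
      (Filter.Eventually.of_forall (by simpa using hψb))
    simpa using h
  have hηb : ∀ᵐ ω ∂μ, |η ω| ≤ 1 := by
    have h := ae_bdd_condExp_of_ae_bdd (m := m) (μ := μ) (R := 1) (f := ψ)
      (Filter.Eventually.of_forall (by simpa using hψb))
    simpa using h
  have hπinvb : ∀ᵐ ω ∂μ, |(π ω)⁻¹| ≤ c⁻¹ := by
    filter_upwards [hpos] with ω hω
    have h0 : 0 < π ω := hc.trans hω
    rw [abs_of_pos (inv_pos.mpr h0)]
    exact inv_anti₀ hc hω.le
  have hπne : ∀ᵐ ω ∂μ, π ω ≠ 0 := by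
    filter_upwards [hpos] with ω hω; exact ne_of_gt (hc.trans hω)
  have habs : ∀ {a A b B : ℝ}, |a| ≤ A → |b| ≤ B → |a * b| ≤ A * B := by
    intro a A b B h1 h2
    rw [abs_mul]
    exact mul_le_mul h1 h2 (abs_nonneg _) ((abs_nonneg _).trans h1)
  -- integrability toolkit
  have mk2 : ∀ {f : Ω → ℝ} {C : ℝ}, AEStronglyMeasurable[mΩ] f μ →
      (∀ᵐ ω ∂μ, |f ω| ≤ C) → MemLp f 2 μ := by
    intro f C hf hb
    exact MemLp.of_bound hf C (by simpa [Real.norm_eq_abs] using hb)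
  have mk1 : ∀ {f : Ω → ℝ} {C : ℝ}, AEStronglyMeasurable[mΩ] f μ →
      (∀ᵐ ω ∂μ, |f ω| ≤ C) → Integrable f μ := by
    intro f C hf hb
    exact memLp_one_iff_integrable.mp (MemLp.of_bound hf C (by simpa [Real.norm_eq_abs] using hb))
  -- the functions
  set SS : Ω → ℝ := fun ω => (π ω)⁻¹ * T ω * (ψ ω - φ ω) with hSSdef
  set SUP : Ω → ℝ := fun ω => (π ω)⁻¹ * T ω * (φ ω - ψ ω) - φ ω with hSUPdef
  set F : Ω → ℝ := (fun ω => T ω * ψ ω) - (fun ω => T ω * φ ω) with hFdef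
  have hSSme : Measurable[mΩ] SS := (hπme.inv.mul hT).mul (hψ.sub hφme)
  have hSUPme : Measurable[mΩ] SUP := ((hπme.inv.mul hT).mul (hφme.sub hψ)).sub hφme
  have hFme : Measurable[mΩ] F := (hT.mul hψ).sub (hT.mul hφme)
  have hSSb : ∀ᵐ ω ∂μ, |SS ω| ≤ c⁻¹ * 1 * 2 := by
    filter_upwards [hπinvb, hφb] with ω h1 h2
    exact habs (habs h1 (hTb ω)) ((abs_sub _ _).trans (by linarith [hψb ω]))
  have hSUPb : ∀ᵐ ω ∂μ, |SUP ω| ≤ c⁻¹ * 1 * 2 + 1 := by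
    filter_upwards [hπinvb, hφb] with ω h1 h2
    have : |(π ω)⁻¹ * T ω * (φ ω - ψ ω)| ≤ c⁻¹ * 1 * 2 :=
      habs (habs h1 (hTb ω)) ((abs_sub _ _).trans (by linarith [hψb ω]))
    calc |SUP ω| ≤ |(π ω)⁻¹ * T ω * (φ ω - ψ ω)| + |φ ω| := abs_sub _ _
      _ ≤ c⁻¹ * 1 * 2 + 1 := by linarith
  -- integrability facts
  have hintT : Integrable T μ := mk1 hT.aestronglyMeasurable (.of_forall hTb)
  have hintψ : Integrable ψ μ := mk1 hψ.aestronglyMeasurable (.of_forall hψb)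
  have hintφ : Integrable φ μ := mk1 hφme.aestronglyMeasurable hφb
  have hintη : Integrable η μ := mk1 hηme.aestronglyMeasurable hηb
  have hintTψ : Integrable (fun ω => T ω * ψ ω) μ :=
    mk1 (hT.mul hψ).aestronglyMeasurable (.of_forall fun ω => habs (hTb ω) (hψb ω))
  have hintTφ : Integrable (fun ω => T ω * φ ω) μ :=
    mk1 (hT.mul hφme).aestronglyMeasurable (by filter_upwards [hφb] with ω h; exact habs (hTb ω) h)
  have hintφT : Integrable (φ * T) μ :=
    mk1 (hφme.mul hT).aestronglyMeasurable (by filter_upwards [hφb] with ω h; exact habs h (hTb ω))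
  have hintφψ : Integrable (φ * ψ) μ :=
    mk1 (hφme.mul hψ).aestronglyMeasurable (by filter_upwards [hφb] with ω h; exact habs h (hψb ω))
  have hintF : Integrable F μ := by
    refine mk1 hFme.aestronglyMeasurable (C := 2) ?_
    filter_upwards [hφb] with ω h
    have h1 : |T ω * ψ ω| ≤ 1 * 1 := habs (hTb ω) (hψb ω)
    have h2 : |T ω * φ ω| ≤ 1 * 1 := habs (hTb ω) h
    calc |F ω| ≤ |T ω * ψ ω| + |T ω * φ ω| := abs_sub _ _
      _ ≤ 2 := by linarith
  have hintgF : Integrable ((fun ω => (π ω)⁻¹) * F) μ := by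
    refine mk1 (hπme.inv.mul hFme).aestronglyMeasurable (C := c⁻¹ * 2) ?_
    filter_upwards [hπinvb, hφb] with ω h1 h2
    have h3 : |F ω| ≤ 2 := by
      have ha : |T ω * ψ ω| ≤ 1 * 1 := habs (hTb ω) (hψb ω)
      have hb2 : |T ω * φ ω| ≤ 1 * 1 := habs (hTb ω) h2
      calc |F ω| ≤ |T ω * ψ ω| + |T ω * φ ω| := abs_sub _ _
        _ ≤ 2 := by linarith
    exact habs h1 h3
  have hintg'F : Integrable ((fun ω => (π ω)⁻¹ * φ ω) * F) μ := by
    refine mk1 ((hπme.inv.mul hφme).mul hFme).aestronglyMeasurable (C := c⁻¹ * 1 * 2) ?_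
    filter_upwards [hπinvb, hφb] with ω h1 h2
    have h3 : |F ω| ≤ 2 := by
      have ha : |T ω * ψ ω| ≤ 1 * 1 := habs (hTb ω) (hψb ω)
      have hb2 : |T ω * φ ω| ≤ 1 * 1 := habs (hTb ω) h2
      calc |F ω| ≤ |T ω * ψ ω| + |T ω * φ ω| := abs_sub _ _
        _ ≤ 2 := by linarith
    exact habs (habs h1 h2) h3
  have hintSS : Integrable SS μ := mk1 hSSme.aestronglyMeasurable hSSb
  have hintSSφ : Integrable (fun ω => SS ω * φ ω) μ := by
    refine mk1 (hSSme.mul hφme).aestronglyMeasurable (C := (c⁻¹ * 1 * 2) * 1) ?_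
    filter_upwards [hSSb, hφb] with ω h1 h2
    exact habs h1 h2
  have hSS2 : MemLp SS 2 μ := mk2 hSSme.aestronglyMeasurable hSSb
  have hSUP2 : MemLp SUP 2 μ := mk2 hSUPme.aestronglyMeasurable hSUPb
  have hφ2 : MemLp φ 2 μ := mk2 hφme.aestronglyMeasurable hφb
  have hintSS2 : Integrable (fun ω => SS ω ^ 2) μ := hSS2.integrable_sq
  have hintφ2 : Integrable (fun ω => φ ω ^ 2) μ := hφ2.integrable_sq
  -- basic integral identities
  have intc : ∀ {f h : Ω → ℝ}, (μ[f|m] =ᵐ[μ] h) → ∫ ω, f ω ∂μ = ∫ ω, h ω ∂μ := by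
    intro f h hfh
    exact (integral_condExp hm).symm.trans (integral_congr_ae hfh)
  have hIφ : ∫ ω, φ ω ∂μ = 0 := by
    have h := integral_condExp (μ := μ) (f := ψ) hm'
    exact h.trans hmean
  have hIη : ∫ ω, η ω ∂μ = 0 := by
    have h := integral_condExp (μ := μ) (f := ψ) hm
    exact h.trans hmean
  -- conditional expectation of F
  have hTφc : μ[fun ω => T ω * φ ω|m] =ᵐ[μ] fun ω => φ ω * π ω := by
    have he : (fun ω => T ω * φ ω) = φ * T := by funext ω; exact mul_comm _ _
    rw [he]
    exact condExp_mul_of_stronglyMeasurable_left hφsmm hintφT hintT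
  have hFc : μ[F|m] =ᵐ[μ] fun ω => π ω * η ω - φ ω * π ω := by
    have h1 : μ[F|m] =ᵐ[μ] μ[fun ω => T ω * ψ ω|m] - μ[fun ω => T ω * φ ω|m] := by
      rw [hFdef]; exact condExp_sub hintTψ hintTφ m
    filter_upwards [h1, hfact, hTφc] with ω e1 e2 e3
    rw [e1, Pi.sub_apply, e2, e3]
  have cancel : ∀ {g : Ω → ℝ}, StronglyMeasurable[m] g → Integrable (g * F) μ →
      μ[g * F|m] =ᵐ[μ] fun ω => g ω * (π ω * η ω - φ ω * π ω) := by
    intro g hg hgF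
    refine (condExp_mul_of_stronglyMeasurable_left hg hgF hintF).trans ?_
    filter_upwards [hFc] with ω hω
    rw [Pi.mul_apply, hω]
  -- E[SS] = 0
  have hSSeq : SS = (fun ω => (π ω)⁻¹) * F := by
    funext ω
    simp only [hSSdef, hFdef, Pi.mul_apply, Pi.sub_apply]
    ring
  have hSScond : μ[SS|m] =ᵐ[μ] fun ω => η ω - φ ω := by
    rw [hSSeq]
    refine (cancel hgsm hintgF).trans ?_
    filter_upwards [hπne] with ω hω
    field_simp
  have hISS : ∫ ω, SS ω ∂μ = 0 := by
    refine (intc hSScond).trans ?_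
    rw [integral_sub hintη hintφ, hIη, hIφ, sub_zero]
  -- E[SS * φ] = 0
  have hφψm : ∫ ω, φ ω * ψ ω ∂μ = ∫ ω, φ ω * η ω ∂μ := by
    have h : μ[φ * ψ|m] =ᵐ[μ] fun ω => φ ω * η ω :=
      condExp_mul_of_stronglyMeasurable_left hφsmm hintφψ hintψ
    exact intc h
  have hφψ𝒢 : ∫ ω, φ ω * ψ ω ∂μ = ∫ ω, φ ω * φ ω ∂μ := by
    have h : μ[φ * ψ|𝒢] =ᵐ[μ] fun ω => φ ω * φ ω :=
      condExp_mul_of_stronglyMeasurable_left hφsm𝒢 hintφψ hintψ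
    exact (integral_condExp hm').symm.trans (integral_congr_ae h)
  have hSSφeq : (fun ω => SS ω * φ ω) = (fun ω => (π ω)⁻¹ * φ ω) * F := by
    funext ω
    simp only [hSSdef, hFdef, Pi.mul_apply, Pi.sub_apply]
    ring
  have hISSφ : ∫ ω, SS ω * φ ω ∂μ = 0 := by
    have hc2 : μ[(fun ω => (π ω)⁻¹ * φ ω) * F|m] =ᵐ[μ] fun ω => φ ω * η ω - φ ω * φ ω := by
      refine (cancel hg'sm hintg'F).trans ?_
      filter_upwards [hπne] with ω hω
      field_simp
    have e1 : ∫ ω, SS ω * φ ω ∂μ = ∫ ω, (φ ω * η ω - φ ω * φ ω) ∂μ := by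
      rw [hSSφeq]; exact intc hc2
    have hintφη : Integrable (fun ω => φ ω * η ω) μ := by
      refine mk1 (hφme.mul hηme).aestronglyMeasurable (C := 1 * 1) ?_
      filter_upwards [hφb, hηb] with ω h1 h2
      exact habs h1 h2
    have hintφφ : Integrable (fun ω => φ ω * φ ω) μ := by
      refine mk1 (hφme.mul hφme).aestronglyMeasurable (C := 1 * 1) ?_
      filter_upwards [hφb] with ω h1
      exact habs h1 h1
    have e2 : ∫ ω, φ ω * η ω ∂μ = ∫ ω, φ ω * φ ω ∂μ := hφψm.symm.trans hφψ𝒢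
    rw [e1, integral_sub hintφη hintφφ, e2, sub_self]
  -- variances
  have hVSS : variance SS μ = ∫ ω, SS ω ^ 2 ∂μ := by
    rw [variance_eq_sub hSS2]
    simp [hISS, Pi.pow_apply]
  have hVφ : variance (fun ω => φ ω) μ = ∫ ω, φ ω ^ 2 ∂μ := by
    have hφ2' : MemLp (fun ω => φ ω) 2 μ := hφ2
    rw [variance_eq_sub hφ2']
    simp [hIφ, Pi.pow_apply]
  have hISUP : ∫ ω, SUP ω ∂μ = 0 := by
    have he : (fun ω => SUP ω) = fun ω => -SS ω - φ ω := by
      funext ω; simp only [hSUPdef, hSSdef]; ring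
    have hnegSS : Integrable (fun ω => -SS ω) μ := hintSS.neg
    rw [he, integral_sub hnegSS hintφ, integral_neg, hISS, hIφ]
    ring
  have hSUPsq : (fun ω => SUP ω ^ 2) = fun ω => SS ω ^ 2 + 2 * (SS ω * φ ω) + φ ω ^ 2 := by
    funext ω; simp only [hSUPdef, hSSdef]; ring
  have hISUP2 : ∫ ω, SUP ω ^ 2 ∂μ = ∫ ω, SS ω ^ 2 ∂μ + ∫ ω, φ ω ^ 2 ∂μ := by
    have h2 : Integrable (fun ω => 2 * (SS ω * φ ω)) μ := hintSSφ.const_mul 2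
    have h1 : Integrable (fun ω => SS ω ^ 2 + 2 * (SS ω * φ ω)) μ := hintSS2.add h2
    rw [hSUPsq, integral_add h1 hintφ2, integral_add hintSS2 h2, integral_const_mul, hISSφ]
    ring
  have hVSUP : variance SUP μ = ∫ ω, SS ω ^ 2 ∂μ + ∫ ω, φ ω ^ 2 ∂μ := by
    rw [variance_eq_sub hSUP2]
    simp only [Pi.pow_apply]
    rw [hISUP2, hISUP]
    ring
  have hdiff : variance SUP μ - variance SS μ = ∫ ω, φ ω ^ 2 ∂μ := by
    rw [hVSUP, hVSS]; ring
  have hφψ2 : ∫ ω, φ ω * ψ ω ∂μ = ∫ ω, φ ω ^ 2 ∂μ := hφψ𝒢.trans (by simp [pow_two])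
  refine ⟨?_, hdiff, ?_⟩
  · rw [hdiff, hVφ, hφψ2]; ring
  · rw [hdiff]
    exact integral_nonneg fun ω => sq_nonneg _

private lemma myIndInt {α : Type*} {mα : MeasurableSpace α} {μ : Measure α}
    [IsFiniteMeasure μ] {s : Set α} (hs : MeasurableSet s) :
    Integrable (s.indicator fun _ => (1 : ℝ)) μ :=
  (integrable_const 1).indicator hs

private lemma myPsiMeas {α : Type*} {mα : MeasurableSpace α} (Y : α → ℝ)
    (hY : Measurable[mα] Y) (θ0 τ : ℝ) :
    Measurable[mα] (fun ω => (if Y ω < θ0 then (1 : ℝ) else 0) - τ) := by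
  have hset : MeasurableSet[mα] {a | Y a < θ0} := measurableSet_lt hY measurable_const
  exact (Measurable.ite hset measurable_const measurable_const).sub measurable_const

theorem ss_qte_efficiency_gain
    {Ω : Type*} [MeasurableSpace Ω] [StandardBorelSpace Ω]
    (μ : Measure Ω) [IsProbabilityMeasure μ]
    {𝒳 : Type*} [MeasurableSpace 𝒳]
    (Y T : Ω → ℝ) (X : Ω → 𝒳)
    (hY : Measurable Y) (hT : Measurable T) (hX : Measurable X)
    -- Y is square integrable
    (hYsq : MemLp Y 2 μ)
    -- T is a binary treatment indicator
    (hT01 : ∀ ω, T ω = 0 ∨ T ω = 1)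
    -- unconfoundedness: T ⫫ Y | X
    (hunconf : CondIndepFun (MeasurableSpace.comap X inferInstance) hX.comap_le T Y μ)
    -- positivity of the propensity score π(X) := E[T | X]
    (c : ℝ) (hc : c ∈ Set.Ioo (0 : ℝ) 1)
    (hpos : ∀ᵐ ω ∂μ,
      (μ[T | MeasurableSpace.comap X inferInstance]) ω ∈ Set.Ioo c (1 - c))
    -- quantile level and target quantile θ0 : E[ψ(Y,θ0)] = 0
    (τ : ℝ) (hτ : τ ∈ Set.Ioo (0 : ℝ) 1) (θ0 : ℝ)
    (hθ0 : ∫ ω, ((if Y ω < θ0 then (1 : ℝ) else 0) - τ) ∂μ = 0)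
    -- 𝒢 a sub-σ-algebra of σ(X); φ* := E[ψ(Y,θ0) | 𝒢]
    (𝒢 : MeasurableSpace Ω) (h𝒢 : 𝒢 ≤ MeasurableSpace.comap X inferInstance) :
    (variance (fun ω =>
          ((μ[T | MeasurableSpace.comap X inferInstance]) ω)⁻¹ * T ω
            * ((μ[fun ω' => (if Y ω' < θ0 then (1 : ℝ) else 0) - τ | 𝒢]) ω
                - ((if Y ω < θ0 then (1 : ℝ) else 0) - τ))
          - (μ[fun ω' => (if Y ω' < θ0 then (1 : ℝ) else 0) - τ | 𝒢]) ω) μ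
      - variance (fun ω =>
          ((μ[T | MeasurableSpace.comap X inferInstance]) ω)⁻¹ * T ω
            * (((if Y ω < θ0 then (1 : ℝ) else 0) - τ)
                - (μ[fun ω' => (if Y ω' < θ0 then (1 : ℝ) else 0) - τ | 𝒢]) ω)) μ
      = 2 * ∫ ω, (μ[fun ω' => (if Y ω' < θ0 then (1 : ℝ) else 0) - τ | 𝒢]) ω
              * ((if Y ω < θ0 then (1 : ℝ) else 0) - τ) ∂μ
        - variance (fun ω =>
            (μ[fun ω' => (if Y ω' < θ0 then (1 : ℝ) else 0) - τ | 𝒢]) ω) μ)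
    ∧ (variance (fun ω =>
          ((μ[T | MeasurableSpace.comap X inferInstance]) ω)⁻¹ * T ω
            * ((μ[fun ω' => (if Y ω' < θ0 then (1 : ℝ) else 0) - τ | 𝒢]) ω
                - ((if Y ω < θ0 then (1 : ℝ) else 0) - τ))
          - (μ[fun ω' => (if Y ω' < θ0 then (1 : ℝ) else 0) - τ | 𝒢]) ω) μ
      - variance (fun ω =>
          ((μ[T | MeasurableSpace.comap X inferInstance]) ω)⁻¹ * T ω
            * (((if Y ω < θ0 then (1 : ℝ) else 0) - τ)
                - (μ[fun ω' => (if Y ω' < θ0 then (1 : ℝ) else 0) - τ | 𝒢]) ω)) μ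
      = ∫ ω, ((μ[fun ω' => (if Y ω' < θ0 then (1 : ℝ) else 0) - τ | 𝒢]) ω) ^ 2 ∂μ)
    ∧ 0 ≤ variance (fun ω =>
          ((μ[T | MeasurableSpace.comap X inferInstance]) ω)⁻¹ * T ω
            * ((μ[fun ω' => (if Y ω' < θ0 then (1 : ℝ) else 0) - τ | 𝒢]) ω
                - ((if Y ω < θ0 then (1 : ℝ) else 0) - τ))
          - (μ[fun ω' => (if Y ω' < θ0 then (1 : ℝ) else 0) - τ | 𝒢]) ω) μ
        - variance (fun ω =>
            ((μ[T | MeasurableSpace.comap X inferInstance]) ω)⁻¹ * T ω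
              * (((if Y ω < θ0 then (1 : ℝ) else 0) - τ)
                  - (μ[fun ω' => (if Y ω' < θ0 then (1 : ℝ) else 0) - τ | 𝒢]) ω)) μ := by
  have hm := hX.comap_le
  set m := MeasurableSpace.comap X (inferInstance : MeasurableSpace 𝒳) with hmdef
  set ψ : Ω → ℝ := fun ω => (if Y ω < θ0 then (1 : ℝ) else 0) - τ with hψdef
  have hTb : ∀ ω, |T ω| ≤ 1 := by
    intro ω; rcases hT01 ω with h | h <;> rw [h] <;> norm_num
  have hψb : ∀ ω, |ψ ω| ≤ 1 := by
    intro ω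
    simp only [hψdef]
    by_cases hy : Y ω < θ0 <;> simp only [hy, if_true, if_false] <;>
      rw [abs_le] <;> constructor <;> linarith [hτ.1, hτ.2]
  have hpos' : ∀ᵐ ω ∂μ, c < (μ[T|m]) ω := by
    filter_upwards [hpos] with ω hω; exact hω.1
  -- key factorization from conditional independence
  have hfact : (μ[fun ω => T ω * ψ ω|m]) =ᵐ[μ] fun ω => (μ[T|m]) ω * (μ[ψ|m]) ω := by
    set S : Set Ω := T ⁻¹' {1} with hSdef
    set U : Set Ω := Y ⁻¹' (Set.Iio θ0) with hUdef
    have hSmeas := hT (measurableSet_singleton (1:ℝ))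
    have hUmeas := hY (measurableSet_Iio : MeasurableSet (Set.Iio θ0))
    have hTind : T = S.indicator (fun _ => (1 : ℝ)) := by
      funext ω
      rcases hT01 ω with h | h <;>
        simp [Set.indicator, hSdef, Set.mem_preimage, h]
    have hUind : (fun ω => if Y ω < θ0 then (1 : ℝ) else 0)
        = U.indicator (fun _ => (1 : ℝ)) := by
      funext ω
      by_cases hy : Y ω < θ0 <;>
        simp [Set.indicator, hUdef, Set.mem_preimage, Set.mem_Iio, hy]
    have hmul : (fun ω => T ω * (if Y ω < θ0 then (1 : ℝ) else 0))
        = (S ∩ U).indicator (fun _ => (1 : ℝ)) := by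
      funext ω
      rcases hT01 ω with h | h <;> by_cases hy : Y ω < θ0 <;>
        simp [Set.indicator, hSdef, hUdef, Set.mem_preimage, Set.mem_Iio, h, hy]
    have key : μ[(S ∩ U).indicator (fun _ => (1 : ℝ))|m] =ᵐ[μ]
        fun ω => (μ[S.indicator (fun _ => (1 : ℝ))|m]) ω
          * (μ[U.indicator (fun _ => (1 : ℝ))|m]) ω := by
      have h := (condIndepFun_iff_condExp_inter_preimage_eq_mul
        (hm' := hX.comap_le) hT hY).mp hunconf {1} (Set.Iio θ0)
        (measurableSet_singleton 1) measurableSet_Iio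
      exact h
    have hintT : Integrable T μ := by
      refine MemLp.integrable le_rfl (MemLp.of_bound hT.aestronglyMeasurable 1 ?_)
      exact Filter.Eventually.of_forall (by simpa [Real.norm_eq_abs] using hTb)
    have hint_ind_U : Integrable (U.indicator fun _ => (1 : ℝ)) μ := myIndInt hUmeas
    have hint_ind_SU : Integrable ((S ∩ U).indicator fun _ => (1 : ℝ)) μ :=
      myIndInt (hSmeas.inter hUmeas)
    have hint_Tite : Integrable (fun ω => T ω * (if Y ω < θ0 then (1 : ℝ) else 0)) μ := by
      rw [hmul]; exact hint_ind_SU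
    have hint_τT : Integrable (fun ω => τ * T ω) μ := hintT.const_mul τ
    have hdec : (fun ω => T ω * ψ ω)
        = (fun ω => T ω * (if Y ω < θ0 then (1 : ℝ) else 0)) - fun ω => τ * T ω := by
      funext ω; simp only [hψdef, Pi.sub_apply]; ring
    have h1 : μ[fun ω => T ω * ψ ω|m] =ᵐ[μ]
        μ[fun ω => T ω * (if Y ω < θ0 then (1 : ℝ) else 0)|m] - μ[fun ω => τ * T ω|m] := by
      rw [hdec]; exact condExp_sub hint_Tite hint_τT m
    have h2 : μ[fun ω => T ω * (if Y ω < θ0 then (1 : ℝ) else 0)|m] =ᵐ[μ]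
        fun ω => (μ[S.indicator (fun _ => (1 : ℝ))|m]) ω
          * (μ[U.indicator (fun _ => (1 : ℝ))|m]) ω := by
      rw [hmul]; exact key
    have h3 : μ[fun ω => τ * T ω|m] =ᵐ[μ] fun ω => τ * (μ[T|m]) ω := by
      have heq : (fun ω => τ * T ω) = τ • T := by funext ω; simp
      rw [heq]
      refine (condExp_smul τ T m).trans ?_
      filter_upwards with ω
      simp
    have h4 : μ[ψ|m] =ᵐ[μ] fun ω => (μ[U.indicator (fun _ => (1 : ℝ))|m]) ω - τ := by
      have hdecψ : ψ = (fun ω => if Y ω < θ0 then (1 : ℝ) else 0) - fun _ => τ := by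
        funext ω; simp [hψdef]
      rw [hdecψ, hUind]
      refine (condExp_sub hint_ind_U (integrable_const τ) m).trans ?_
      rw [condExp_const hm]
      filter_upwards with ω
      simp
    have hπS : μ[T|m] = μ[S.indicator (fun _ => (1 : ℝ))|m] := by rw [← hTind]
    filter_upwards [h1, h2, h3, h4] with ω e1 e2 e3 e4
    rw [e1, Pi.sub_apply, e2, e3, e4, hπS]
    ring
  have hψme := myPsiMeas Y hY θ0 τ
  exact aux_gain μ T ψ m 𝒢 hm h𝒢 hT hψme hTb hψb c hc.1 hpos' hθ0 hfact
end

section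
/- (Semiparametric optimality inequality for the quantile, equation (21)) One has Var(π(X)^{−1}T(ψ(Y,θ0) − φ(X,θ0))) = E[π(X)^{−2}T(ψ(Y,θ0) − φ(X,θ0))²], and for every measurable g: 𝒳 → ℝ with E[π(X)^{−2}T(ψ(Y,θ0) − g(X))²] < ∞, E[π(X)^{−2}T(ψ(Y,θ0) − φ(X,θ0))²] ≤ E[π(X)^{−2}T(ψ(Y,θ0) − g(X))²], with equality if and only if g(X) = φ(X,θ0) almost surely. -/
/-!
Statement 12 (semiparametric optimality inequality for the quantile, eq. (21)):
with `ψ(y,θ0) := 1{y < θ0} − τ` and `φ(X,θ0) := E[ψ(Y,θ0) | X]`,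
`Var(π(X)⁻¹T(ψ(Y,θ0) − φ(X,θ0))) = E[π(X)⁻²T(ψ(Y,θ0) − φ(X,θ0))²]`, and for
every measurable `g` with `E[π(X)⁻²T(ψ(Y,θ0) − g(X))²] < ∞` the latter is
`≤ E[π(X)⁻²T(ψ(Y,θ0) − g(X))²]`, with equality iff `g(X) = φ(X,θ0)` a.s.
-/

open MeasureTheory ProbabilityTheory

private lemma integrable_of_ae_bound' {Ω : Type*} [MeasurableSpace Ω] {μ : Measure Ω}
    [IsFiniteMeasure μ] {f : Ω → ℝ} (hf : AEStronglyMeasurable f μ) {C : ℝ}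
    (h : ∀ᵐ ω ∂μ, |f ω| ≤ C) : Integrable f μ :=
  memLp_one_iff_integrable.mp (MemLp.of_bound hf C (by simpa using h))

private theorem quantile_semiparametric_optimality_aux
    {Ω : Type*} {m : MeasurableSpace Ω} [mΩ : MeasurableSpace Ω] [StandardBorelSpace Ω]
    (hm : m ≤ mΩ)
    (μ : Measure Ω) [IsProbabilityMeasure μ]
    (Y T : Ω → ℝ)
    (hY : Measurable Y) (hT : Measurable T)
    (hT01 : ∀ ω, T ω = 0 ∨ T ω = 1)
    (hunconf : CondIndepFun m hm T Y μ)
    (c : ℝ) (hc : c ∈ Set.Ioo (0 : ℝ) 1)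
    (hpos : ∀ᵐ ω ∂μ, (μ[T | m]) ω ∈ Set.Ioo c (1 - c))
    (τ : ℝ) (hτ : τ ∈ Set.Ioo (0 : ℝ) 1) (θ0 : ℝ) :
    (variance (fun ω =>
        ((μ[T | m]) ω)⁻¹ * T ω
          * (((if Y ω < θ0 then (1 : ℝ) else 0) - τ)
              - (μ[fun ω' => (if Y ω' < θ0 then (1 : ℝ) else 0) - τ | m]) ω)) μ
      = ∫ ω, (((μ[T | m]) ω) ^ 2)⁻¹ * T ω
          * (((if Y ω < θ0 then (1 : ℝ) else 0) - τ)
              - (μ[fun ω' => (if Y ω' < θ0 then (1 : ℝ) else 0) - τ | m]) ω) ^ 2 ∂μ)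
    ∧ ∀ G : Ω → ℝ, Measurable[m] G →
        Integrable (fun ω =>
          (((μ[T | m]) ω) ^ 2)⁻¹ * T ω
            * (((if Y ω < θ0 then (1 : ℝ) else 0) - τ) - G ω) ^ 2) μ →
        ((∫ ω, (((μ[T | m]) ω) ^ 2)⁻¹ * T ω
            * (((if Y ω < θ0 then (1 : ℝ) else 0) - τ)
                - (μ[fun ω' => (if Y ω' < θ0 then (1 : ℝ) else 0) - τ | m]) ω) ^ 2 ∂μ
          ≤ ∫ ω, (((μ[T | m]) ω) ^ 2)⁻¹ * T ω
            * (((if Y ω < θ0 then (1 : ℝ) else 0) - τ) - G ω) ^ 2 ∂μ)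
        ∧ ((∫ ω, (((μ[T | m]) ω) ^ 2)⁻¹ * T ω
              * (((if Y ω < θ0 then (1 : ℝ) else 0) - τ)
                  - (μ[fun ω' => (if Y ω' < θ0 then (1 : ℝ) else 0) - τ | m]) ω) ^ 2 ∂μ
            = ∫ ω, (((μ[T | m]) ω) ^ 2)⁻¹ * T ω
              * (((if Y ω < θ0 then (1 : ℝ) else 0) - τ) - G ω) ^ 2 ∂μ)
          ↔ G =ᵐ[μ] μ[fun ω' => (if Y ω' < θ0 then (1 : ℝ) else 0) - τ | m])) := by
  haveI hsf : SigmaFinite (μ.trim hm) := by infer_instance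
  set ψ : Ω → ℝ := fun ω => (if Y ω < θ0 then (1:ℝ) else 0) - τ with hψ_def
  set π : Ω → ℝ := μ[T|m] with hπ_def
  set φ : Ω → ℝ := μ[ψ|m] with hφ_def
  have hψ' : ∀ ω, ((if Y ω < θ0 then (1:ℝ) else 0) - τ) = ψ ω := fun ω => rfl
  simp only [hψ']
  -- basic measurability and bounds
  have hψmble : Measurable ψ := by
    rw [hψ_def]
    exact (Measurable.ite (hY measurableSet_Iio) measurable_const measurable_const).sub
      measurable_const
  have hψbd : ∀ ω, |ψ ω| ≤ 1 := by
    intro ω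
    simp only [hψ_def]
    split <;> rw [abs_le] <;> constructor <;> linarith [hτ.1, hτ.2]
  have hT0 : ∀ ω, 0 ≤ T ω := fun ω => by rcases hT01 ω with h | h <;> simp [h]
  have hT1 : ∀ ω, T ω ≤ 1 := fun ω => by rcases hT01 ω with h | h <;> simp [h]
  have hTsq : ∀ ω, T ω ^ 2 = T ω := fun ω => by rcases hT01 ω with h | h <;> simp [h]
  have hTb : ∀ ω, |T ω| ≤ 1 := fun ω => by
    rw [abs_of_nonneg (hT0 ω)]; exact hT1 ω
  have hTint : Integrable T μ :=
    integrable_of_ae_bound' hT.aestronglyMeasurable (.of_forall hTb)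
  have hψint : Integrable ψ μ :=
    integrable_of_ae_bound' hψmble.aestronglyMeasurable (.of_forall hψbd)
  have hπsm : StronglyMeasurable[m] π := stronglyMeasurable_condExp
  have hφsm : StronglyMeasurable[m] φ := stronglyMeasurable_condExp
  have hπmble : Measurable π := (hπsm.mono hm).measurable
  have hφmble : Measurable φ := (hφsm.mono hm).measurable
  have hφbd : ∀ᵐ ω ∂μ, |φ ω| ≤ 1 := by
    have h := ae_bdd_condExp_of_ae_bdd (m := m) (μ := μ) (R := 1) (f := ψ)
      (.of_forall (by simpa using hψbd))
    simpa using h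
  -- conditional independence: E[T ψ | m] = π φ
  set A : Set Ω := T ⁻¹' {1} with hA_def
  set B : Set Ω := Y ⁻¹' (Set.Iio θ0) with hB_def
  have hAmeas : MeasurableSet A := hT (measurableSet_singleton 1)
  have hBmeas : MeasurableSet B := hY measurableSet_Iio
  have hTA : T = A.indicator fun _ => (1:ℝ) := by
    funext ω
    rcases hT01 ω with h | h <;>
      simp [hA_def, Set.indicator_apply, Set.mem_preimage, h]
  have hψB : ψ = fun ω => B.indicator (fun _ => (1:ℝ)) ω - τ := by
    funext ω
    by_cases hb : Y ω < θ0 <;>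
      simp [hψ_def, hB_def, Set.indicator_apply, Set.mem_preimage, Set.mem_Iio, hb]
  have hindAB : Integrable ((A ∩ B).indicator fun _ => (1:ℝ)) μ :=
    (integrable_const 1).indicator (hAmeas.inter hBmeas)
  have hindA : Integrable (A.indicator fun _ => (1:ℝ)) μ :=
    (integrable_const 1).indicator hAmeas
  have hindB : Integrable (B.indicator fun _ => (1:ℝ)) μ :=
    (integrable_const 1).indicator hBmeas
  have hcondAB : (μ⟦A ∩ B | m⟧) =ᵐ[μ] fun ω => (μ⟦A | m⟧) ω * (μ⟦B | m⟧) ω :=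
    (condIndepFun_iff_condExp_inter_preimage_eq_mul hT hY).mp hunconf {1} (Set.Iio θ0)
      (measurableSet_singleton 1) measurableSet_Iio
  have hπA : π = μ⟦A | m⟧ := by rw [hπ_def, hTA]
  have hφB : φ =ᵐ[μ] fun ω => (μ⟦B | m⟧) ω - τ := by
    have h1 : φ = μ[(B.indicator fun _ => (1:ℝ)) - fun _ => τ | m] := by
      rw [hφ_def, hψB]; rfl
    rw [h1]
    refine (condExp_sub (m := m) hindB (integrable_const τ)).trans ?_
    rw [condExp_const hm]
    exact .of_forall fun ω => rfl
  have hK : μ[fun ω => T ω * ψ ω | m] =ᵐ[μ] fun ω => π ω * φ ω := by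
    have hmul : (fun ω => T ω * ψ ω) =
        ((A ∩ B).indicator fun _ => (1:ℝ)) - τ • (A.indicator fun _ => (1:ℝ)) := by
      funext ω
      rw [hTA, hψB]
      by_cases ha : ω ∈ A <;> by_cases hb : ω ∈ B <;>
        simp [Set.indicator_apply, Set.mem_inter_iff, ha, hb]
    rw [hmul]
    refine (condExp_sub (m := m) hindAB (hindA.smul τ)).trans ?_
    have hτA := condExp_smul (μ := μ) (m := m) τ (A.indicator fun _ => (1:ℝ))
    filter_upwards [hcondAB, hφB, hτA] with ω e1 e2 e3
    simp only [Pi.sub_apply]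
    rw [e1, e3, hπA, e2]
    simp only [Pi.smul_apply, smul_eq_mul]
    ring
  -- E[T φ | m] = π φ and E[T(ψ-φ)|m] = 0
  have hTφint : Integrable (fun ω => T ω * φ ω) μ := by
    refine integrable_of_ae_bound' ((hT.mul hφmble).aestronglyMeasurable) (C := 1) ?_
    filter_upwards [hφbd] with ω h1
    rw [abs_mul]
    calc |T ω| * |φ ω| ≤ 1 * 1 := by
          exact mul_le_mul (hTb ω) h1 (abs_nonneg _) zero_le_one
      _ = 1 := by norm_num
  have hTψint : Integrable (fun ω => T ω * ψ ω) μ := by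
    refine integrable_of_ae_bound' ((hT.mul hψmble).aestronglyMeasurable) (C := 1) ?_
    refine .of_forall fun ω => ?_
    rw [abs_mul]
    calc |T ω| * |ψ ω| ≤ 1 * 1 :=
          mul_le_mul (hTb ω) (hψbd ω) (abs_nonneg _) zero_le_one
      _ = 1 := by norm_num
  have hTφcond : μ[fun ω => T ω * φ ω | m] =ᵐ[μ] fun ω => π ω * φ ω := by
    have hcomm : (fun ω => T ω * φ ω) = φ * T := funext fun ω => mul_comm _ _
    rw [hcomm]
    have h1 := condExp_mul_of_stronglyMeasurable_left hφsm (hcomm ▸ hTφint) hTint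
    refine h1.trans (.of_forall fun ω => ?_)
    simp only [Pi.mul_apply, ← hπ_def]
    ring
  have hW : μ[fun ω => T ω * (ψ ω - φ ω) | m] =ᵐ[μ] 0 := by
    have hsplit : (fun ω => T ω * (ψ ω - φ ω))
        = (fun ω => T ω * ψ ω) - fun ω => T ω * φ ω :=
      funext fun ω => by simp only [Pi.sub_apply]; ring
    rw [hsplit]
    refine (condExp_sub (m := m) hTψint hTφint).trans ?_
    filter_upwards [hK, hTφcond] with ω e1 e2
    simp only [Pi.sub_apply, Pi.zero_apply]
    rw [e1, e2]
    ring
  have hWint : Integrable (fun ω => T ω * (ψ ω - φ ω)) μ := by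
    refine integrable_of_ae_bound' ((hT.mul (hψmble.sub hφmble)).aestronglyMeasurable)
      (C := 2) ?_
    filter_upwards [hφbd] with ω h1
    rw [abs_mul]
    calc |T ω| * |ψ ω - φ ω| ≤ 1 * 2 := by
          refine mul_le_mul (hTb ω) ?_ (abs_nonneg _) zero_le_one
          calc |ψ ω - φ ω| ≤ |ψ ω| + |φ ω| := abs_sub _ _
            _ ≤ 2 := by linarith [hψbd ω]
      _ = 2 := by norm_num
  -- orthogonality engine
  have horth : ∀ h : Ω → ℝ, StronglyMeasurable[m] h →
      Integrable (fun ω => h ω * (T ω * (ψ ω - φ ω))) μ →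
      ∫ ω, h ω * (T ω * (ψ ω - φ ω)) ∂μ = 0 := by
    intro h hsm hint
    have h1 : (fun ω => h ω * (T ω * (ψ ω - φ ω)))
        = h * fun ω => T ω * (ψ ω - φ ω) := rfl
    have h2 := condExp_mul_of_stronglyMeasurable_left hsm (h1 ▸ hint) hWint
    have h3 : μ[h * fun ω => T ω * (ψ ω - φ ω) | m] =ᵐ[μ] 0 := by
      refine h2.trans ?_
      filter_upwards [hW] with ω e
      simp only [Pi.mul_apply, Pi.zero_apply, e, mul_zero]
    rw [← integral_condExp hm (f := fun ω => h ω * (T ω * (ψ ω - φ ω))), h1,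
      integral_congr_ae h3]
    simp
  -- part (a)
  have hcpos : (0:ℝ) < c := hc.1
  have parta : variance (fun ω => (π ω)⁻¹ * T ω * (ψ ω - φ ω)) μ
      = ∫ ω, (π ω ^ 2)⁻¹ * T ω * (ψ ω - φ ω) ^ 2 ∂μ := by
    set V : Ω → ℝ := fun ω => (π ω)⁻¹ * T ω * (ψ ω - φ ω) with hV_def
    have hVmble : Measurable V := (hπmble.inv.mul hT).mul (hψmble.sub hφmble)
    have hVbd : ∀ᵐ ω ∂μ, |V ω| ≤ c⁻¹ * 2 := by
      filter_upwards [hpos, hφbd] with ω h1 h2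
      have h0 : 0 < π ω := lt_trans hcpos h1.1
      have hinv : |(π ω)⁻¹| ≤ c⁻¹ := by
        rw [abs_of_pos (inv_pos.mpr h0)]
        exact inv_anti₀ hcpos h1.1.le
      have hsub : |ψ ω - φ ω| ≤ 2 := by
        calc |ψ ω - φ ω| ≤ |ψ ω| + |φ ω| := abs_sub _ _
          _ ≤ 2 := by linarith [hψbd ω]
      calc |V ω| = |(π ω)⁻¹| * |T ω| * |ψ ω - φ ω| := by
            rw [hV_def]; simp [abs_mul]
        _ ≤ c⁻¹ * 1 * 2 := by
            refine mul_le_mul (mul_le_mul hinv (hTb ω) (abs_nonneg _) ?_) hsub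
              (abs_nonneg _) ?_
            · positivity
            · positivity
        _ = c⁻¹ * 2 := by ring
    have hV2 : MemLp V 2 μ :=
      MemLp.of_bound hVmble.aestronglyMeasurable (c⁻¹ * 2)
        (by simpa [Real.norm_eq_abs] using hVbd)
    have hEV : ∫ ω, V ω ∂μ = 0 := by
      have hassoc : V = fun ω => (π ω)⁻¹ * (T ω * (ψ ω - φ ω)) :=
        funext fun ω => mul_assoc _ _ _
      rw [hassoc]
      refine horth _ (hπsm.measurable.inv.stronglyMeasurable) ?_
      exact hassoc ▸ (integrable_of_ae_bound' hVmble.aestronglyMeasurable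
        (C := c⁻¹ * 2) hVbd)
    have hsq : (V ^ 2) = fun ω => (π ω ^ 2)⁻¹ * T ω * (ψ ω - φ ω) ^ 2 := by
      funext ω
      simp only [Pi.pow_apply, hV_def]
      rw [mul_pow, mul_pow, inv_pow, hTsq ω]
    rw [variance_eq_sub hV2, hsq, hEV]
    simp
  refine ⟨parta, ?_⟩
  intro G hGm hGint
  have hGmble : Measurable G := hGm.mono hm le_rfl
  have hGsm : StronglyMeasurable[m] G := hGm.stronglyMeasurable
  -- nonnegativity and bounds for the weight
  have hA0 : ∀ ω, 0 ≤ (π ω ^ 2)⁻¹ * T ω :=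
    fun ω => mul_nonneg (inv_nonneg.mpr (sq_nonneg _)) (hT0 ω)
  -- integrability of the three pieces
  have hI1 : Integrable (fun ω => (π ω ^ 2)⁻¹ * T ω * (ψ ω - φ ω) ^ 2) μ := by
    refine integrable_of_ae_bound'
      (((hπmble.pow_const 2).inv.mul hT).mul ((hψmble.sub hφmble).pow_const 2)).aestronglyMeasurable
      (C := (c ^ 2)⁻¹ * 4) ?_
    filter_upwards [hpos, hφbd] with ω h1 h2
    have h0 : 0 < π ω := lt_trans hcpos h1.1
    have hinv : (π ω ^ 2)⁻¹ ≤ (c ^ 2)⁻¹ := by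
      refine inv_anti₀ (by positivity) ?_
      nlinarith [h1.1]
    have hsub2 : (ψ ω - φ ω) ^ 2 ≤ 4 := by
      have hsub : |ψ ω - φ ω| ≤ 2 := by
        calc |ψ ω - φ ω| ≤ |ψ ω| + |φ ω| := abs_sub _ _
          _ ≤ 2 := by linarith [hψbd ω]
      nlinarith [abs_nonneg (ψ ω - φ ω), sq_abs (ψ ω - φ ω)]
    rw [abs_of_nonneg (mul_nonneg (hA0 ω) (sq_nonneg _))]
    calc (π ω ^ 2)⁻¹ * T ω * (ψ ω - φ ω) ^ 2 ≤ (c ^ 2)⁻¹ * 1 * 4 := by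
          refine mul_le_mul (mul_le_mul hinv (hT1 ω) (hT0 ω) (by positivity)) hsub2
            (sq_nonneg _) (by positivity)
      _ = (c ^ 2)⁻¹ * 4 := by ring
  have hI3 : Integrable (fun ω => (π ω ^ 2)⁻¹ * T ω * (φ ω - G ω) ^ 2) μ := by
    refine Integrable.mono' ((hGint.const_mul 2).add (hI1.const_mul 2))
      (((hπmble.pow_const 2).inv.mul hT).mul
        ((hφmble.sub hGmble).pow_const 2)).aestronglyMeasurable ?_
    refine .of_forall fun ω => ?_
    rw [Real.norm_eq_abs, abs_of_nonneg (mul_nonneg (hA0 ω) (sq_nonneg _))]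
    simp only [Pi.add_apply]
    nlinarith [mul_nonneg (hA0 ω) (sq_nonneg ((ψ ω - G ω) + (ψ ω - φ ω)))]
  have hI2 : Integrable (fun ω => (π ω ^ 2)⁻¹ * (φ ω - G ω) * (T ω * (ψ ω - φ ω))) μ := by
    refine Integrable.mono' (hI1.add hI3)
      (((hπmble.pow_const 2).inv.mul (hφmble.sub hGmble)).mul
        (hT.mul (hψmble.sub hφmble))).aestronglyMeasurable ?_
    refine .of_forall fun ω => ?_
    rw [Real.norm_eq_abs, abs_le]
    have k1 := mul_nonneg (hA0 ω) (sq_nonneg ((ψ ω - φ ω) + (φ ω - G ω)))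
    have k2 := mul_nonneg (hA0 ω) (sq_nonneg ((ψ ω - φ ω) - (φ ω - G ω)))
    have k3 := mul_nonneg (hA0 ω) (sq_nonneg (ψ ω - φ ω))
    have k4 := mul_nonneg (hA0 ω) (sq_nonneg (φ ω - G ω))
    constructor <;> simp only [Pi.add_apply] <;> nlinarith
  -- cross term is zero
  have hcross : ∫ ω, (π ω ^ 2)⁻¹ * (φ ω - G ω) * (T ω * (ψ ω - φ ω)) ∂μ = 0 :=
    horth _ (((hπsm.measurable.pow_const 2).inv.mul
      (hφsm.measurable.sub hGm)).stronglyMeasurable) hI2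
  -- decomposition
  have hfun : (fun ω => (π ω ^ 2)⁻¹ * T ω * (ψ ω - G ω) ^ 2)
      = fun ω => ((π ω ^ 2)⁻¹ * T ω * (ψ ω - φ ω) ^ 2
            + (π ω ^ 2)⁻¹ * T ω * (φ ω - G ω) ^ 2)
          + (2:ℝ) * ((π ω ^ 2)⁻¹ * (φ ω - G ω) * (T ω * (ψ ω - φ ω))) :=
    funext fun ω => by ring
  have hdecomp : ∫ ω, (π ω ^ 2)⁻¹ * T ω * (ψ ω - G ω) ^ 2 ∂μ
      = ∫ ω, (π ω ^ 2)⁻¹ * T ω * (ψ ω - φ ω) ^ 2 ∂μ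
        + ∫ ω, (π ω ^ 2)⁻¹ * T ω * (φ ω - G ω) ^ 2 ∂μ := by
    have e : ∫ ω, (((π ω ^ 2)⁻¹ * T ω * (ψ ω - φ ω) ^ 2
            + (π ω ^ 2)⁻¹ * T ω * (φ ω - G ω) ^ 2)
          + (2:ℝ) * ((π ω ^ 2)⁻¹ * (φ ω - G ω) * (T ω * (ψ ω - φ ω)))) ∂μ
        = (∫ ω, ((π ω ^ 2)⁻¹ * T ω * (ψ ω - φ ω) ^ 2
            + (π ω ^ 2)⁻¹ * T ω * (φ ω - G ω) ^ 2) ∂μ)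
          + ∫ ω, (2:ℝ) * ((π ω ^ 2)⁻¹ * (φ ω - G ω) * (T ω * (ψ ω - φ ω))) ∂μ :=
      integral_add (hI1.add hI3) (hI2.const_mul 2)
    have e2 : ∫ ω, ((π ω ^ 2)⁻¹ * T ω * (ψ ω - φ ω) ^ 2
            + (π ω ^ 2)⁻¹ * T ω * (φ ω - G ω) ^ 2) ∂μ
        = (∫ ω, (π ω ^ 2)⁻¹ * T ω * (ψ ω - φ ω) ^ 2 ∂μ)
          + ∫ ω, (π ω ^ 2)⁻¹ * T ω * (φ ω - G ω) ^ 2 ∂μ :=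
      integral_add hI1 hI3
    have e3 : ∫ ω, (2:ℝ) * ((π ω ^ 2)⁻¹ * (φ ω - G ω) * (T ω * (ψ ω - φ ω))) ∂μ
        = 2 * ∫ ω, (π ω ^ 2)⁻¹ * (φ ω - G ω) * (T ω * (ψ ω - φ ω)) ∂μ :=
      integral_const_mul 2 _
    rw [hfun, e, e2, e3, hcross]
    ring
  -- ∫ I3 = ∫ π⁻¹ (φ - G)²
  have hfsm : StronglyMeasurable[m] (fun ω => (π ω ^ 2)⁻¹ * (φ ω - G ω) ^ 2) :=
    ((hπsm.measurable.pow_const 2).inv.mul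
      ((hφsm.measurable.sub hGm).pow_const 2)).stronglyMeasurable
  have hfT_int : Integrable ((fun ω => (π ω ^ 2)⁻¹ * (φ ω - G ω) ^ 2) * T) μ :=
    hI3.congr (.of_forall fun ω => by simp only [Pi.mul_apply]; ring)
  have hpull : μ[(fun ω => (π ω ^ 2)⁻¹ * (φ ω - G ω) ^ 2) * T | m]
      =ᵐ[μ] fun ω => (π ω)⁻¹ * (φ ω - G ω) ^ 2 := by
    refine (condExp_mul_of_stronglyMeasurable_left hfsm hfT_int hTint).trans ?_
    filter_upwards [hpos] with ω h1
    have h0 : π ω ≠ 0 := (lt_trans hcpos h1.1).ne'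
    simp only [Pi.mul_apply, ← hπ_def]
    field_simp
  have hJint : Integrable (fun ω => (π ω)⁻¹ * (φ ω - G ω) ^ 2) μ :=
    integrable_condExp.congr hpull
  have hI3J : ∫ ω, (π ω ^ 2)⁻¹ * T ω * (φ ω - G ω) ^ 2 ∂μ
      = ∫ ω, (π ω)⁻¹ * (φ ω - G ω) ^ 2 ∂μ := by
    have h1 : ∫ ω, (π ω ^ 2)⁻¹ * T ω * (φ ω - G ω) ^ 2 ∂μ
        = ∫ ω, ((fun ω => (π ω ^ 2)⁻¹ * (φ ω - G ω) ^ 2) * T) ω ∂μ :=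
      integral_congr_ae (.of_forall fun ω => by simp only [Pi.mul_apply]; ring)
    rw [h1, ← integral_condExp hm, integral_congr_ae hpull]
  have hJnonneg : ∀ᵐ ω ∂μ, 0 ≤ (π ω)⁻¹ * (φ ω - G ω) ^ 2 := by
    filter_upwards [hpos] with ω h1
    have h0 : 0 < π ω := lt_trans hcpos h1.1
    positivity
  have hJzero : (∫ ω, (π ω)⁻¹ * (φ ω - G ω) ^ 2 ∂μ = 0) ↔ G =ᵐ[μ] φ := by
    rw [integral_eq_zero_iff_of_nonneg_ae hJnonneg hJint]
    constructor
    · intro h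
      filter_upwards [hpos, h] with ω h1 h2
      have h0 : 0 < π ω := lt_trans hcpos h1.1
      have := h2
      simp only [Pi.zero_apply] at this
      rcases mul_eq_zero.mp this with h3 | h3
      · exact absurd h3 (inv_ne_zero h0.ne')
      · have := pow_eq_zero_iff (n := 2) (by norm_num) |>.mp h3
        linarith [sub_eq_zero.mp this]
    · intro h
      filter_upwards [h] with ω h2
      simp [h2]
  have hI3nonneg : 0 ≤ ∫ ω, (π ω ^ 2)⁻¹ * T ω * (φ ω - G ω) ^ 2 ∂μ :=
    integral_nonneg fun ω => mul_nonneg (hA0 ω) (sq_nonneg _)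
  constructor
  · rw [hdecomp]; linarith
  · rw [hdecomp]
    constructor
    · intro h
      have h3 : ∫ ω, (π ω ^ 2)⁻¹ * T ω * (φ ω - G ω) ^ 2 ∂μ = 0 := by linarith
      rw [hI3J] at h3
      exact hJzero.mp h3
    · intro h
      have h3 : ∫ ω, (π ω)⁻¹ * (φ ω - G ω) ^ 2 ∂μ = 0 := hJzero.mpr h
      rw [← hI3J] at h3
      rw [h3]
      ring


theorem quantile_semiparametric_optimality
    {Ω : Type*} [MeasurableSpace Ω] [StandardBorelSpace Ω]
    (μ : Measure Ω) [IsProbabilityMeasure μ]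
    {𝒳 : Type*} [MeasurableSpace 𝒳]
    (Y T : Ω → ℝ) (X : Ω → 𝒳)
    (hY : Measurable Y) (hT : Measurable T) (hX : Measurable X)
    -- Y is square integrable
    (hYsq : MemLp Y 2 μ)
    -- T is a binary treatment indicator
    (hT01 : ∀ ω, T ω = 0 ∨ T ω = 1)
    -- unconfoundedness: T ⫫ Y | X
    (hunconf : CondIndepFun (MeasurableSpace.comap X inferInstance) hX.comap_le T Y μ)
    -- positivity of the propensity score π(X) := E[T | X]
    (c : ℝ) (hc : c ∈ Set.Ioo (0 : ℝ) 1)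
    (hpos : ∀ᵐ ω ∂μ,
      (μ[T | MeasurableSpace.comap X inferInstance]) ω ∈ Set.Ioo c (1 - c))
    -- quantile level and target quantile θ0 : E[ψ(Y,θ0)] = 0
    (τ : ℝ) (hτ : τ ∈ Set.Ioo (0 : ℝ) 1) (θ0 : ℝ)
    (hθ0 : ∫ ω, ((if Y ω < θ0 then (1 : ℝ) else 0) - τ) ∂μ = 0) :
    -- (a) the variance identity
    (variance (fun ω =>
        ((μ[T | MeasurableSpace.comap X inferInstance]) ω)⁻¹ * T ω
          * (((if Y ω < θ0 then (1 : ℝ) else 0) - τ)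
              - (μ[fun ω' => (if Y ω' < θ0 then (1 : ℝ) else 0) - τ |
                    MeasurableSpace.comap X inferInstance]) ω)) μ
      = ∫ ω, (((μ[T | MeasurableSpace.comap X inferInstance]) ω) ^ 2)⁻¹ * T ω
          * (((if Y ω < θ0 then (1 : ℝ) else 0) - τ)
              - (μ[fun ω' => (if Y ω' < θ0 then (1 : ℝ) else 0) - τ |
                    MeasurableSpace.comap X inferInstance]) ω) ^ 2 ∂μ)
    -- (b) optimality of φ(X,θ0) = E[ψ(Y,θ0) | X], with equality characterization
    ∧ ∀ g : 𝒳 → ℝ, Measurable g →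
        Integrable (fun ω =>
          (((μ[T | MeasurableSpace.comap X inferInstance]) ω) ^ 2)⁻¹ * T ω
            * (((if Y ω < θ0 then (1 : ℝ) else 0) - τ) - g (X ω)) ^ 2) μ →
        ((∫ ω, (((μ[T | MeasurableSpace.comap X inferInstance]) ω) ^ 2)⁻¹ * T ω
            * (((if Y ω < θ0 then (1 : ℝ) else 0) - τ)
                - (μ[fun ω' => (if Y ω' < θ0 then (1 : ℝ) else 0) - τ |
                      MeasurableSpace.comap X inferInstance]) ω) ^ 2 ∂μ
          ≤ ∫ ω, (((μ[T | MeasurableSpace.comap X inferInstance]) ω) ^ 2)⁻¹ * T ω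
            * (((if Y ω < θ0 then (1 : ℝ) else 0) - τ) - g (X ω)) ^ 2 ∂μ)
        ∧ ((∫ ω, (((μ[T | MeasurableSpace.comap X inferInstance]) ω) ^ 2)⁻¹ * T ω
              * (((if Y ω < θ0 then (1 : ℝ) else 0) - τ)
                  - (μ[fun ω' => (if Y ω' < θ0 then (1 : ℝ) else 0) - τ |
                        MeasurableSpace.comap X inferInstance]) ω) ^ 2 ∂μ
            = ∫ ω, (((μ[T | MeasurableSpace.comap X inferInstance]) ω) ^ 2)⁻¹ * T ω
              * (((if Y ω < θ0 then (1 : ℝ) else 0) - τ) - g (X ω)) ^ 2 ∂μ)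
          ↔ (fun ω => g (X ω))
              =ᵐ[μ] μ[fun ω' => (if Y ω' < θ0 then (1 : ℝ) else 0) - τ |
                      MeasurableSpace.comap X inferInstance])) := by
  obtain ⟨h1, h2⟩ := quantile_semiparametric_optimality_aux hX.comap_le μ Y T hY hT hT01
    hunconf c hc hpos τ hτ θ0
  exact ⟨h1, fun g hg hgint =>
    h2 (fun ω => g (X ω)) (hg.comp (measurable_iff_comap_le.mpr le_rfl)) hgint⟩
end

section
/- (Double robustness of the kernel-smoothing target for the ATE) Let S := g(X) for a measurable transformation g (e.g. S = P0ᵀX), let π*: 𝒳 → (c, 1−c) be measurable, and define κ_t(S) := E[π*(X)^{−1}TY^t | σ(S)] for t = 0,1. If either π*(X) = π(X) almost surely or E[Y | σ(S)] = E[Y | σ(X)] almost surely (but not necessarily both), then κ₀(S) is almost surely bounded away from zero and κ₁(S)/κ₀(S) = E[Y | σ(S)] almost surely. -/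
/-!
Statement 14 (double robustness of the kernel-smoothing target for the ATE):
with `S := g(X)` and `κ_t := E[π*(X)⁻¹ T Y^t | σ(S)]` (t = 0,1), if either the
propensity score or the dimension reduction is correct, then `κ₀(S)` is a.s.
bounded away from zero and `κ₁(S)/κ₀(S) = E[Y | σ(S)]` a.s.
-/

open MeasureTheory ProbabilityTheory

section AuxiliaryLemmas

open Filter

set_option maxHeartbeats 1000000
set_option synthInstance.maxHeartbeats 400000

private lemma myInd {Ω : Type*} {mΩ : MeasurableSpace Ω} {μ : Measure Ω} {A : Set Ω}
    (hA : MeasurableSet A) {f : Ω → ℝ} (hf : Integrable f μ) :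
    Integrable (A.indicator f) μ :=
  hf.indicator hA

lemma condExp_indicator_mul_aux
    {Ω : Type*} {mΩ : MeasurableSpace Ω} (μ : Measure Ω) [IsProbabilityMeasure μ]
    {m mY : MeasurableSpace Ω} (hm : m ≤ mΩ) (hmY : mY ≤ mΩ)
    {A : Set Ω} (hA : MeasurableSet[mΩ] A)
    (H : ∀ B : Set Ω, MeasurableSet[mY] B →
      (μ[(A ∩ B).indicator (fun _ => (1:ℝ)) | m]) =ᵐ[μ]
        fun ω => (μ[A.indicator (fun _ => (1:ℝ)) | m]) ω
          * (μ[B.indicator (fun _ => (1:ℝ)) | m]) ω) :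
    ∀ ⦃f : Ω → ℝ⦄, Integrable f (μ.trim hmY) →
      μ[A.indicator f | m] =ᵐ[μ]
        fun ω => (μ[A.indicator (fun _ => (1:ℝ)) | m]) ω * (μ[f | m]) ω := by
  set q := μ[A.indicator (fun _ => (1:ℝ)) | m] with hq
  have hAint : Integrable (A.indicator (fun _ => (1:ℝ))) μ :=
    myInd hA (integrable_const (1:ℝ))
  have hqbd : ∀ᵐ ω ∂μ, ‖q ω‖ ≤ 1 := by
    have h0 : 0 ≤ᵐ[μ] q := condExp_nonneg (Filter.Eventually.of_forall fun ω => by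
      by_cases h : ω ∈ A <;> simp [Set.indicator_apply, h])
    have h1 : q ≤ᵐ[μ] fun _ => (1:ℝ) := by
      have h2 := condExp_mono (μ := μ) (m := m) hAint (integrable_const (1:ℝ))
        (Filter.Eventually.of_forall fun ω => by
          by_cases h : ω ∈ A <;> simp [Set.indicator_apply, h])
      rwa [condExp_const hm (1:ℝ)] at h2
    filter_upwards [h0, h1] with ω h0 h1
    have h0' : (0:ℝ) ≤ q ω := h0
    rw [Real.norm_eq_abs, abs_le]
    exact ⟨by linarith, h1⟩
  have hqm : AEStronglyMeasurable[mΩ] q μ := (stronglyMeasurable_condExp.mono hm).aestronglyMeasurable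
  -- the "defect" function
  set D : (Ω → ℝ) → Ω → ℝ :=
    fun f ω => (μ[A.indicator f | m]) ω - q ω * (μ[f | m]) ω with hD
  have hDint : ∀ f : Ω → ℝ, Integrable (D f) μ := by
    intro f
    exact Integrable.sub integrable_condExp
      (Integrable.bdd_mul integrable_condExp hqm hqbd)
  have hPiff : ∀ f : Ω → ℝ, Integrable f μ →
      ((μ[A.indicator f | m] =ᵐ[μ] fun ω => q ω * (μ[f | m]) ω)
        ↔ ∫ ω, ‖D f ω‖ ∂μ = 0) := by
    intro f _
    rw [integral_eq_zero_iff_of_nonneg_ae (Filter.Eventually.of_forall fun ω => norm_nonneg _)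
      (hDint f).norm]
    constructor
    · intro h; filter_upwards [h] with ω hω
      simp [hD, hω]
    · intro h; filter_upwards [h] with ω hω
      have : D f ω = 0 := by simpa using hω
      have := sub_eq_zero.mp this
      simpa [hD] using this
  -- Lipschitz-type estimate
  have hest : ∀ f g : Ω → ℝ, Integrable f μ → Integrable g μ →
      ∫ ω, ‖D f ω - D g ω‖ ∂μ ≤ 2 * ∫ ω, ‖f ω - g ω‖ ∂μ := by
    intro f g hf hg
    have h1 : (fun ω => D f ω - D g ω) =ᵐ[μ] D (f - g) := by
      have e1 : μ[A.indicator (f - g) | m]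
          =ᵐ[μ] μ[A.indicator f | m] - μ[A.indicator g | m] := by
        have : A.indicator (f - g) = A.indicator f - A.indicator g := by
          funext ω; by_cases h : ω ∈ A <;> simp [Set.indicator_apply, h]
        rw [this]
        exact condExp_sub (myInd hA hf) (myInd hA hg) _
      have e2 : μ[f - g | m] =ᵐ[μ] μ[f | m] - μ[g | m] := condExp_sub hf hg _
      filter_upwards [e1, e2] with ω e1 e2
      simp only [hD, e1, e2, Pi.sub_apply]; ring
    rw [show ∫ ω, ‖D f ω - D g ω‖ ∂μ = ∫ ω, ‖D (f - g) ω‖ ∂μ from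
      integral_congr_ae (by filter_upwards [h1] with ω hω; simp only [hω])]
    have h2 : ∫ ω, ‖D (f - g) ω‖ ∂μ
        ≤ ∫ ω, ‖(μ[A.indicator (f - g) | m]) ω‖ ∂μ
          + ∫ ω, ‖q ω * (μ[f - g | m]) ω‖ ∂μ := by
      rw [← integral_add integrable_condExp.norm
        ((Integrable.bdd_mul integrable_condExp hqm hqbd).norm)]
      refine integral_mono_ae (hDint _).norm ?_ (Filter.Eventually.of_forall fun ω => ?_)
      · exact integrable_condExp.norm.add
          ((Integrable.bdd_mul integrable_condExp hqm hqbd).norm)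
      · exact (norm_sub_le _ _)
    have h3 : ∫ ω, ‖(μ[A.indicator (f - g) | m]) ω‖ ∂μ ≤ ∫ ω, ‖f ω - g ω‖ ∂μ := by
      have := integral_abs_condExp_le (μ := μ) (m := m) (A.indicator (f - g))
      simp only [← Real.norm_eq_abs] at this
      refine this.trans (integral_mono (myInd hA (hf.sub hg)).norm (hf.sub hg).norm
        fun ω => ?_)
      by_cases h : ω ∈ A <;> simp [Set.indicator_apply, h, Pi.sub_apply]
    have h4 : ∫ ω, ‖q ω * (μ[f - g | m]) ω‖ ∂μ ≤ ∫ ω, ‖f ω - g ω‖ ∂μ := by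
      have h5 : ∫ ω, ‖q ω * (μ[f - g | m]) ω‖ ∂μ ≤ ∫ ω, ‖(μ[f - g | m]) ω‖ ∂μ := by
        refine integral_mono_ae (Integrable.bdd_mul integrable_condExp hqm hqbd).norm
          integrable_condExp.norm ?_
        filter_upwards [hqbd] with ω hω
        rw [norm_mul]
        calc ‖q ω‖ * ‖(μ[f - g | m]) ω‖ ≤ 1 * ‖(μ[f - g | m]) ω‖ :=
          mul_le_mul_of_nonneg_right hω (norm_nonneg _)
        _ = ‖(μ[f - g | m]) ω‖ := one_mul _
      refine h5.trans ?_
      have := integral_abs_condExp_le (μ := μ) (m := m) (f - g)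
      simp only [← Real.norm_eq_abs] at this
      exact this.trans (le_of_eq (integral_congr_ae (Filter.Eventually.of_forall fun ω => by
        simp [Pi.sub_apply])))
    linarith
  refine Integrable.induction (μ := μ.trim hmY)
    (P := fun f => μ[A.indicator f | m] =ᵐ[μ] fun ω => q ω * (μ[f | m]) ω) ?_ ?_ ?_ ?_
  · intro cc s hs _
    have hind : A.indicator (s.indicator fun _ => cc)
        = cc • (A ∩ s).indicator (fun _ => (1:ℝ)) := by
      funext ω
      by_cases hωA : ω ∈ A <;> by_cases hωs : ω ∈ s <;>
        simp [Set.indicator_apply, hωA, hωs, Set.mem_inter_iff]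
    have hind2 : (s.indicator fun _ => cc) = cc • s.indicator (fun _ => (1:ℝ)) := by
      funext ω; by_cases hωs : ω ∈ s <;> simp [Set.indicator_apply, hωs]
    rw [hind, hind2]
    calc μ[cc • (A ∩ s).indicator (fun _ => (1:ℝ)) | m]
        =ᵐ[μ] cc • μ[(A ∩ s).indicator (fun _ => (1:ℝ)) | m] := condExp_smul cc _ _
      _ =ᵐ[μ] fun ω => q ω * ((cc • μ[s.indicator (fun _ => (1:ℝ)) | m]) ω) := by
          filter_upwards [H s hs] with ω hω
          simp only [Pi.smul_apply, smul_eq_mul, hω]; ring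
      _ =ᵐ[μ] fun ω => q ω * (μ[cc • s.indicator (fun _ => (1:ℝ)) | m]) ω := by
          filter_upwards [condExp_smul (μ := μ) (m := m) cc
            (s.indicator (fun _ => (1:ℝ)))] with ω hω
          rw [hω]
  · intro f g _ hfi hgi hPf hPg
    have hfi' : Integrable f μ := integrable_of_integrable_trim hmY hfi
    have hgi' : Integrable g μ := integrable_of_integrable_trim hmY hgi
    have hsum : A.indicator (f + g) = A.indicator f + A.indicator g :=
      Set.indicator_add A f g
    rw [hsum]
    calc μ[A.indicator f + A.indicator g | m]
        =ᵐ[μ] μ[A.indicator f | m] + μ[A.indicator g | m] :=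
          condExp_add (myInd hA hfi') (myInd hA hgi') _
      _ =ᵐ[μ] fun ω => q ω * ((μ[f | m]) ω + (μ[g | m]) ω) := by
          filter_upwards [hPf, hPg] with ω h1 h2
          simp only [Pi.add_apply, h1, h2]; ring
      _ =ᵐ[μ] fun ω => q ω * (μ[f + g | m]) ω := by
          filter_upwards [condExp_add hfi' hgi' _] with ω hω
          rw [hω, Pi.add_apply]
  · -- closedness in L¹(μ.trim hmY)
    refine IsSeqClosed.isClosed ?_
    intro x a hx hxa
    have hint : ∀ b : Ω →₁[μ.trim hmY] ℝ, Integrable (b : Ω → ℝ) μ :=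
      fun b => integrable_of_integrable_trim hmY (L1.integrable_coeFn b)
    show μ[A.indicator (a : Ω → ℝ) | m] =ᵐ[μ] fun ω => q ω * (μ[(a : Ω → ℝ) | m]) ω
    rw [hPiff _ (hint a)]
    have key : ∀ n, ∫ ω, ‖D (a : Ω → ℝ) ω‖ ∂μ ≤ 2 * dist a (x n) := by
      intro n
      have hPn : ∫ ω, ‖D ((x n : Ω → ℝ)) ω‖ ∂μ = 0 := (hPiff _ (hint (x n))).mp (hx n)
      have hz : D ((x n : Ω → ℝ)) =ᵐ[μ] 0 := by
        have := (integral_eq_zero_iff_of_nonneg_ae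
          (Filter.Eventually.of_forall fun ω => norm_nonneg _) (hDint _).norm).mp hPn
        filter_upwards [this] with ω hω
        simpa using hω
      have e1 : ∫ ω, ‖D (a : Ω → ℝ) ω‖ ∂μ
          = ∫ ω, ‖D (a : Ω → ℝ) ω - D ((x n : Ω → ℝ)) ω‖ ∂μ := by
        refine integral_congr_ae ?_
        filter_upwards [hz] with ω hω
        rw [hω]; simp
      rw [e1]
      refine (hest _ _ (hint a) (hint (x n))).trans ?_
      have e2 : ∫ ω, ‖(a : Ω → ℝ) ω - (x n : Ω → ℝ) ω‖ ∂μ = dist a (x n) := by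
        have hsm : AEStronglyMeasurable (fun ω => ‖(a : Ω → ℝ) ω - (x n : Ω → ℝ) ω‖)
            (μ.trim hmY) :=
          ((Lp.aestronglyMeasurable a).sub (Lp.aestronglyMeasurable (x n))).norm
        rw [integral_trim_ae hmY hsm]
        rw [L1.dist_eq_integral_dist]
        refine integral_congr_ae ?_
        filter_upwards [Lp.coeFn_sub a (x n)] with ω hω
        simp [dist_eq_norm]
      rw [e2]

    have htend : Tendsto (fun n => 2 * dist a (x n)) atTop (nhds 0) := by
      have := tendsto_iff_dist_tendsto_zero.mp hxa
      have h2 : Tendsto (fun n => dist a (x n)) atTop (nhds 0) := by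
        simpa [dist_comm] using this
      simpa using h2.const_mul 2
    have hle : ∫ ω, ‖D (a : Ω → ℝ) ω‖ ∂μ ≤ 0 := ge_of_tendsto' htend key
    exact le_antisymm hle (integral_nonneg fun ω => norm_nonneg _)
  · intro f g hfg hfi hPf
    have hfg' : f =ᵐ[μ] g := ae_eq_of_ae_eq_trim hfg
    have h1 : A.indicator f =ᵐ[μ] A.indicator g := by
      filter_upwards [hfg'] with ω hω
      by_cases h : ω ∈ A <;> simp [Set.indicator_apply, h, hω]
    calc μ[A.indicator g | m] =ᵐ[μ] μ[A.indicator f | m] := condExp_congr_ae h1.symm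
      _ =ᵐ[μ] fun ω => q ω * (μ[f | m]) ω := hPf
      _ =ᵐ[μ] fun ω => q ω * (μ[g | m]) ω := by
          filter_upwards [condExp_congr_ae hfg'] with ω hω
          rw [hω]


section Aux

variable {Ω : Type*} {mS mX mΩ : MeasurableSpace Ω}

private lemma main_aux
    (hmS_le : mS ≤ mX) (hmX : mX ≤ mΩ)
    (μ : Measure Ω) [IsProbabilityMeasure μ]
    (Y T : Ω → ℝ) (hY : Measurable Y) (hT : Measurable T)
    (hYint : Integrable Y μ)
    (hT01 : ∀ ω, T ω = 0 ∨ T ω = 1)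
    (W : Ω → ℝ) (hWmX : Measurable[mX] W)
    (c : ℝ) (hc : c ∈ Set.Ioo (0 : ℝ) 1)
    (hWrange : ∀ ω, W ω ∈ Set.Ioo c (1 - c))
    (hpos : ∀ᵐ ω ∂μ, (μ[T | mX]) ω ∈ Set.Ioo c (1 - c))
    (H : ∀ B : Set Ω, MeasurableSet[MeasurableSpace.comap Y inferInstance] B →
      (μ[((T ⁻¹' {1}) ∩ B).indicator (fun _ => (1:ℝ)) | mX]) =ᵐ[μ]
        fun ω => (μ[(T ⁻¹' {1}).indicator (fun _ => (1:ℝ)) | mX]) ω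
          * (μ[B.indicator (fun _ => (1:ℝ)) | mX]) ω)
    (hdr : (W =ᵐ[μ] μ[T | mX]) ∨ (μ[Y | mS] =ᵐ[μ] μ[Y | mX])) :
    (∃ δ : ℝ, 0 < δ ∧ ∀ᵐ ω ∂μ, δ ≤ (μ[fun ω' => (W ω')⁻¹ * T ω' | mS]) ω)
    ∧ (fun ω => (μ[fun ω' => (W ω')⁻¹ * T ω' * Y ω' | mS]) ω
        / (μ[fun ω' => (W ω')⁻¹ * T ω' | mS]) ω)
      =ᵐ[μ] μ[Y | mS] := by
  have hmS : mS ≤ mΩ := hmS_le.trans hmX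
  have hπs_pos : ∀ ω, 0 < W ω := fun ω => hc.1.trans (hWrange ω).1
  have hWm : StronglyMeasurable[mX] (fun ω => (W ω)⁻¹) :=
    (hWmX.inv).stronglyMeasurable
  have hWM : Measurable (fun ω => (W ω)⁻¹) := (hWmX.mono hmX le_rfl).inv
  have hWbd : ∀ ω, ‖(W ω)⁻¹‖ ≤ c⁻¹ := by
    intro ω
    rw [Real.norm_eq_abs, abs_of_pos (inv_pos.mpr (hπs_pos ω))]
    exact inv_anti₀ hc.1 (hWrange ω).1.le
  have hTbd : ∀ ω, ‖T ω‖ ≤ 1 := by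
    intro ω; rcases hT01 ω with h | h <;> simp [h]
  have hTint : Integrable T μ := by
    have h := Integrable.bdd_mul (c := 1) (integrable_const (μ := μ) (1:ℝ))
      hT.aestronglyMeasurable (Filter.Eventually.of_forall hTbd)
    simpa using h
  have hWTint : Integrable (fun ω => (W ω)⁻¹ * T ω) μ :=
    Integrable.bdd_mul (c := c⁻¹) hTint hWM.aestronglyMeasurable
      (Filter.Eventually.of_forall hWbd)
  have hTYint : Integrable (fun ω => T ω * Y ω) μ :=
    Integrable.bdd_mul (c := 1) hYint hT.aestronglyMeasurable
      (Filter.Eventually.of_forall hTbd)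
  have hWTYint : Integrable (fun ω => (W ω)⁻¹ * (T ω * Y ω)) μ :=
    Integrable.bdd_mul (c := c⁻¹) hTYint hWM.aestronglyMeasurable
      (Filter.Eventually.of_forall hWbd)
  -- unconfoundedness: E[T·Y | mX] = π · E[Y | mX]
  have hA : MeasurableSet (T ⁻¹' {1}) := hT (measurableSet_singleton 1)
  have hTind : T = (T ⁻¹' {1}).indicator (fun _ => (1:ℝ)) := by
    funext ω; rcases hT01 ω with h | h <;>
      simp [Set.indicator_apply, Set.mem_preimage, h]
  have hTYind : (fun ω => T ω * Y ω) = (T ⁻¹' {1}).indicator Y := by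
    funext ω; rcases hT01 ω with h | h <;>
      simp [Set.indicator_apply, Set.mem_preimage, h]
  have hmY : MeasurableSpace.comap Y inferInstance ≤ mΩ := hY.comap_le
  have hYtrim : Integrable Y (μ.trim hmY) :=
    hYint.trim hmY (measurable_iff_comap_le.mpr le_rfl).stronglyMeasurable
  have hTY : μ[(fun ω => T ω * Y ω) | mX] =ᵐ[μ]
      fun ω => (μ[T | mX]) ω * (μ[Y | mX]) ω := by
    have h := condExp_indicator_mul_aux μ hmX hmY hA H hYtrim
    rw [hTYind]
    refine h.trans ?_
    have : μ[T | mX] = μ[(T ⁻¹' {1}).indicator (fun _ => (1:ℝ)) | mX] := by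
      conv_lhs => rw [hTind]
    rw [this]
  -- pull-out of the mX-measurable factor W⁻¹
  have hpull0 : μ[(fun ω => (W ω)⁻¹ * T ω) | mX] =ᵐ[μ]
      fun ω => (W ω)⁻¹ * (μ[T | mX]) ω :=
    condExp_mul_of_stronglyMeasurable_left (f := fun ω => (W ω)⁻¹) (g := T)
      hWm hWTint hTint
  have hpull1 : μ[(fun ω => (W ω)⁻¹ * (T ω * Y ω)) | mX] =ᵐ[μ]
      fun ω => (W ω)⁻¹ * ((μ[T | mX]) ω * (μ[Y | mX]) ω) := by
    refine (condExp_mul_of_stronglyMeasurable_left (f := fun ω => (W ω)⁻¹)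
      (g := fun ω => T ω * Y ω) hWm hWTYint hTYint).trans ?_
    filter_upwards [hTY] with ω hω
    show (W ω)⁻¹ * (μ[(fun ω => T ω * Y ω) | mX]) ω = _
    rw [hω]
  -- tower property
  have htower0 : μ[(fun ω => (W ω)⁻¹ * T ω) | mS] =ᵐ[μ]
      μ[(fun ω => (W ω)⁻¹ * (μ[T | mX]) ω) | mS] :=
    (condExp_condExp_of_le hmS_le hmX).symm.trans (condExp_congr_ae hpull0)
  have hassoc : (fun ω => (W ω)⁻¹ * T ω * Y ω)
      = fun ω => (W ω)⁻¹ * (T ω * Y ω) := by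
    funext ω; ring
  have htower1 : μ[(fun ω => (W ω)⁻¹ * T ω * Y ω) | mS] =ᵐ[μ]
      μ[(fun ω => (W ω)⁻¹ * ((μ[T | mX]) ω * (μ[Y | mX]) ω)) | mS] := by
    rw [hassoc]
    exact (condExp_condExp_of_le hmS_le hmX).symm.trans (condExp_congr_ae hpull1)
  have hWπint : Integrable (fun ω => (W ω)⁻¹ * (μ[T | mX]) ω) μ :=
    Integrable.bdd_mul (c := c⁻¹) integrable_condExp hWM.aestronglyMeasurable
      (Filter.Eventually.of_forall hWbd)
  rcases hdr with hπeq | hYeq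
  · -- correct propensity score
    have hWπ1 : (fun ω => (W ω)⁻¹ * (μ[T | mX]) ω) =ᵐ[μ] fun _ => (1:ℝ) := by
      filter_upwards [hπeq] with ω hω
      rw [← hω]
      exact inv_mul_cancel₀ (ne_of_gt (hπs_pos ω))
    have hκ₀ : μ[(fun ω => (W ω)⁻¹ * T ω) | mS] =ᵐ[μ] fun _ => (1:ℝ) := by
      refine (htower0.trans (condExp_congr_ae hWπ1)).trans ?_
      rw [condExp_const hmS (1:ℝ)]
    have hκ₁ : μ[(fun ω => (W ω)⁻¹ * T ω * Y ω) | mS] =ᵐ[μ] μ[Y | mS] := by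
      refine htower1.trans ?_
      have h1 : (fun ω => (W ω)⁻¹ * ((μ[T | mX]) ω * (μ[Y | mX]) ω))
          =ᵐ[μ] μ[Y | mX] := by
        filter_upwards [hWπ1] with ω hω
        have h2 : (W ω)⁻¹ * ((μ[T | mX]) ω * (μ[Y | mX]) ω)
            = ((W ω)⁻¹ * (μ[T | mX]) ω) * (μ[Y | mX]) ω := by ring
        rw [h2, hω, one_mul]
      exact (condExp_congr_ae h1).trans (condExp_condExp_of_le hmS_le hmX)
    refine ⟨⟨1, one_pos, by filter_upwards [hκ₀] with ω hω; rw [hω]⟩, ?_⟩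
    filter_upwards [hκ₀, hκ₁] with ω h0 h1
    rw [h0, h1, div_one]
  · -- correct dimension reduction
    have hπbd : ∀ᵐ ω ∂μ, c < (μ[T | mX]) ω ∧ (μ[T | mX]) ω < 1 - c := by
      filter_upwards [hpos] with ω hω; exact ⟨hω.1, hω.2⟩
    have hδpos : 0 < c / (1 - c) := div_pos hc.1 (by linarith [hc.2])
    have hWπlb : ∀ᵐ ω ∂μ, c / (1 - c) ≤ (W ω)⁻¹ * (μ[T | mX]) ω := by
      filter_upwards [hπbd] with ω hω
      have h1c : (0:ℝ) < 1 - c := by linarith [hc.2]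
      have hinv : (1 - c)⁻¹ ≤ (W ω)⁻¹ :=
        inv_anti₀ (hπs_pos ω) (hWrange ω).2.le
      have h2 : (1 - c)⁻¹ * c ≤ (W ω)⁻¹ * (μ[T | mX]) ω :=
        mul_le_mul hinv hω.1.le hc.1.le (le_trans (inv_pos.mpr h1c).le hinv)
      calc c / (1 - c) = (1 - c)⁻¹ * c := by rw [div_eq_mul_inv, mul_comm]
        _ ≤ _ := h2
    have hκ₀ : μ[(fun ω => (W ω)⁻¹ * T ω) | mS] =ᵐ[μ]
        μ[(fun ω => (W ω)⁻¹ * (μ[T | mX]) ω) | mS] := htower0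
    have hκ₀lb : ∀ᵐ ω ∂μ,
        c / (1 - c) ≤ (μ[(fun ω => (W ω)⁻¹ * (μ[T | mX]) ω) | mS]) ω := by
      have h := condExp_mono (μ := μ) (m := mS) (integrable_const (c / (1 - c)))
        hWπint hWπlb
      rw [condExp_const hmS (c / (1 - c))] at h
      exact h
    have hκ₁ : μ[(fun ω => (W ω)⁻¹ * T ω * Y ω) | mS] =ᵐ[μ]
        fun ω => (μ[Y | mS]) ω
          * (μ[(fun ω => (W ω)⁻¹ * (μ[T | mX]) ω) | mS]) ω := by
      refine htower1.trans ?_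
      have h1 : (fun ω => (W ω)⁻¹ * ((μ[T | mX]) ω * (μ[Y | mX]) ω))
          =ᵐ[μ] fun ω => (μ[Y | mS]) ω * ((W ω)⁻¹ * (μ[T | mX]) ω) := by
        filter_upwards [hYeq] with ω hω
        rw [← hω]; ring
      refine (condExp_congr_ae h1).trans ?_
      have hint1 : Integrable (fun ω => (μ[Y | mS]) ω
          * ((W ω)⁻¹ * (μ[T | mX]) ω)) μ := by
        have haesm : AEStronglyMeasurable (fun ω => (W ω)⁻¹ * (μ[T | mX]) ω) μ :=
          hWM.aestronglyMeasurable.mul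
            (stronglyMeasurable_condExp.mono hmX).aestronglyMeasurable
        have hbd : ∀ᵐ ω ∂μ, ‖(W ω)⁻¹ * (μ[T | mX]) ω‖ ≤ c⁻¹ * 1 := by
          filter_upwards [hπbd] with ω hω
          rw [norm_mul]
          refine mul_le_mul (hWbd ω) ?_ (norm_nonneg _) (inv_nonneg.mpr hc.1.le)
          rw [Real.norm_eq_abs, abs_le]
          constructor
          · linarith [hω.1, hc.1]
          · linarith [hω.2, hc.1]
        have h : Integrable (fun ω => ((W ω)⁻¹ * (μ[T | mX]) ω) * (μ[Y | mS]) ω) μ :=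
          Integrable.bdd_mul (c := c⁻¹ * 1) integrable_condExp haesm hbd
        exact h.congr (Filter.Eventually.of_forall fun ω => mul_comm _ _)
      exact condExp_mul_of_stronglyMeasurable_left (f := μ[Y | mS])
        (g := fun ω => (W ω)⁻¹ * (μ[T | mX]) ω)
        stronglyMeasurable_condExp hint1 hWπint
    refine ⟨⟨c / (1 - c), hδpos, ?_⟩, ?_⟩
    · filter_upwards [hκ₀, hκ₀lb] with ω h0 hlb
      rw [h0]; exact hlb
    · filter_upwards [hκ₀, hκ₀lb, hκ₁] with ω h0 hlb h1
      rw [h1, h0, mul_div_assoc, div_self (ne_of_gt (lt_of_lt_of_le hδpos hlb)),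
        mul_one]

end Aux

end AuxiliaryLemmas

theorem kernel_target_double_robustness_ate
    {Ω : Type*} [MeasurableSpace Ω] [StandardBorelSpace Ω]
    (μ : Measure Ω) [IsProbabilityMeasure μ]
    {𝒳 : Type*} [MeasurableSpace 𝒳] {𝒮 : Type*} [MeasurableSpace 𝒮]
    (Y T : Ω → ℝ) (X : Ω → 𝒳)
    (hY : Measurable Y) (hT : Measurable T) (hX : Measurable X)
    -- Y is square integrable
    (hYsq : MemLp Y 2 μ)
    -- T is a binary treatment indicator
    (hT01 : ∀ ω, T ω = 0 ∨ T ω = 1)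
    -- unconfoundedness: T ⫫ Y | X
    (hunconf : CondIndepFun (MeasurableSpace.comap X inferInstance) hX.comap_le T Y μ)
    -- positivity of the propensity score π(X) := E[T | X]
    (c : ℝ) (hc : c ∈ Set.Ioo (0 : ℝ) 1)
    (hpos : ∀ᵐ ω ∂μ,
      (μ[T | MeasurableSpace.comap X inferInstance]) ω ∈ Set.Ioo c (1 - c))
    -- the measurable transformation S := g(X)
    (g : 𝒳 → 𝒮) (hg : Measurable g)
    -- the working propensity score π*
    (πs : 𝒳 → ℝ) (hπs : Measurable πs)
    (hπsRange : ∀ x, πs x ∈ Set.Ioo c (1 - c))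
    -- double robustness: either π* = π a.s. or E[Y | σ(S)] = E[Y | σ(X)] a.s.
    (hdr : ((fun ω => πs (X ω)) =ᵐ[μ] μ[T | MeasurableSpace.comap X inferInstance])
        ∨ (μ[Y | MeasurableSpace.comap (fun ω => g (X ω)) inferInstance]
            =ᵐ[μ] μ[Y | MeasurableSpace.comap X inferInstance])) :
    -- κ₀(S) is a.s. bounded away from zero
    (∃ δ : ℝ, 0 < δ ∧ ∀ᵐ ω ∂μ,
      δ ≤ (μ[fun ω' => (πs (X ω'))⁻¹ * T ω' * (Y ω') ^ (0 : ℕ) |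
            MeasurableSpace.comap (fun ω' => g (X ω')) inferInstance]) ω)
    -- and κ₁(S)/κ₀(S) = E[Y | σ(S)] a.s.
    ∧ (fun ω =>
        (μ[fun ω' => (πs (X ω'))⁻¹ * T ω' * (Y ω') ^ (1 : ℕ) |
            MeasurableSpace.comap (fun ω' => g (X ω')) inferInstance]) ω
        / (μ[fun ω' => (πs (X ω'))⁻¹ * T ω' * (Y ω') ^ (0 : ℕ) |
            MeasurableSpace.comap (fun ω' => g (X ω')) inferInstance]) ω)
      =ᵐ[μ] μ[Y | MeasurableSpace.comap (fun ω => g (X ω)) inferInstance] := by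
  simp only [pow_zero, pow_one, mul_one]
  have hmS_le : MeasurableSpace.comap (fun ω => g (X ω)) inferInstance
      ≤ MeasurableSpace.comap X inferInstance := by
    rw [show (fun ω => g (X ω)) = g ∘ X from rfl, ← MeasurableSpace.comap_comp]
    exact MeasurableSpace.comap_mono hg.comap_le
  have H : ∀ B : Set Ω, MeasurableSet[MeasurableSpace.comap Y inferInstance] B →
      (μ[((T ⁻¹' {1}) ∩ B).indicator (fun _ => (1:ℝ)) |
          MeasurableSpace.comap X inferInstance]) =ᵐ[μ]
        fun ω => (μ[(T ⁻¹' {1}).indicator (fun _ => (1:ℝ)) |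
            MeasurableSpace.comap X inferInstance]) ω
          * (μ[B.indicator (fun _ => (1:ℝ)) |
              MeasurableSpace.comap X inferInstance]) ω := by
    intro B hB
    obtain ⟨t, ht, rfl⟩ := hB
    exact (condIndepFun_iff_condExp_inter_preimage_eq_mul hT hY).mp hunconf
      {1} t (measurableSet_singleton 1) ht
  exact main_aux hmS_le hX.comap_le μ Y T hY hT (hYsq.integrable one_le_two) hT01
    (fun ω => πs (X ω)) (hπs.comp (measurable_iff_comap_le.mpr le_rfl)) c hc
    (fun ω => hπsRange (X ω)) hpos H hdr
end

section
/- (Double robustness of the kernel-smoothing target for the QTE) Let S := g(X) for a measurable transformation g, let π*: 𝒳 → (c, 1−c) be measurable, fix θ ∈ ℝ, and define φ_t(S,θ) := E[π*(X)^{−1}T(ψ(Y,θ))^t | σ(S)] for t = 0,1 (so φ₀ does not depend on θ). If either π*(X) = π(X) almost surely or E[ψ(Y,θ) | σ(S)] = E[ψ(Y,θ) | σ(X)] almost surely (but not necessarily both), then φ₀(S) is almost surely bounded away from zero and φ₁(S,θ)/φ₀(S) = E[ψ(Y,θ) | σ(S)] almost surely. -/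
/-!
Statement 17 (double robustness of the kernel-smoothing target for the QTE):
with `ψ(y,θ) := 1{y < θ} − τ`, `S := g(X)` and
`φ_t(S,θ) := E[π*(X)⁻¹ T (ψ(Y,θ))^t | σ(S)]` (t = 0,1), if either the
propensity score or the dimension reduction is correct, then `φ₀(S)` is a.s.
bounded away from zero and `φ₁(S,θ)/φ₀(S) = E[ψ(Y,θ) | σ(S)]` a.s.
-/

open MeasureTheory ProbabilityTheory

theorem kernel_target_double_robustness_qte
    {Ω : Type*} [MeasurableSpace Ω] [StandardBorelSpace Ω]
    (μ : Measure Ω) [IsProbabilityMeasure μ]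
    {𝒳 : Type*} [MeasurableSpace 𝒳] {𝒮 : Type*} [MeasurableSpace 𝒮]
    (Y T : Ω → ℝ) (X : Ω → 𝒳)
    (hY : Measurable Y) (hT : Measurable T) (hX : Measurable X)
    -- T is a binary treatment indicator
    (hT01 : ∀ ω, T ω = 0 ∨ T ω = 1)
    -- unconfoundedness: T ⫫ Y | X
    (hunconf : CondIndepFun (MeasurableSpace.comap X inferInstance) hX.comap_le T Y μ)
    -- positivity of the propensity score π(X) := E[T | X]
    (c : ℝ) (hc : c ∈ Set.Ioo (0 : ℝ) 1)
    (hpos : ∀ᵐ ω ∂μ,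
      (μ[T | MeasurableSpace.comap X inferInstance]) ω ∈ Set.Ioo c (1 - c))
    -- quantile level and a fixed θ
    (τ : ℝ) (hτ : τ ∈ Set.Ioo (0 : ℝ) 1) (θ : ℝ)
    -- the measurable transformation S := g(X)
    (g : 𝒳 → 𝒮) (hg : Measurable g)
    -- the working propensity score π*
    (πs : 𝒳 → ℝ) (hπs : Measurable πs)
    (hπsRange : ∀ x, πs x ∈ Set.Ioo c (1 - c))
    -- double robustness:
    -- either π* = π a.s. or E[ψ(Y,θ) | σ(S)] = E[ψ(Y,θ) | σ(X)] a.s.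
    (hdr : ((fun ω => πs (X ω)) =ᵐ[μ] μ[T | MeasurableSpace.comap X inferInstance])
        ∨ (μ[fun ω => (if Y ω < θ then (1 : ℝ) else 0) - τ |
              MeasurableSpace.comap (fun ω => g (X ω)) inferInstance]
            =ᵐ[μ] μ[fun ω => (if Y ω < θ then (1 : ℝ) else 0) - τ |
              MeasurableSpace.comap X inferInstance])) :
    -- φ₀(S) is a.s. bounded away from zero
    (∃ δ : ℝ, 0 < δ ∧ ∀ᵐ ω ∂μ,
      δ ≤ (μ[fun ω' => (πs (X ω'))⁻¹ * T ω'
              * ((if Y ω' < θ then (1 : ℝ) else 0) - τ) ^ (0 : ℕ) |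
            MeasurableSpace.comap (fun ω' => g (X ω')) inferInstance]) ω)
    -- and φ₁(S,θ)/φ₀(S) = E[ψ(Y,θ) | σ(S)] a.s.
    ∧ (fun ω =>
        (μ[fun ω' => (πs (X ω'))⁻¹ * T ω'
              * ((if Y ω' < θ then (1 : ℝ) else 0) - τ) ^ (1 : ℕ) |
            MeasurableSpace.comap (fun ω' => g (X ω')) inferInstance]) ω
        / (μ[fun ω' => (πs (X ω'))⁻¹ * T ω'
              * ((if Y ω' < θ then (1 : ℝ) else 0) - τ) ^ (0 : ℕ) |
            MeasurableSpace.comap (fun ω' => g (X ω')) inferInstance]) ω)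
      =ᵐ[μ] μ[fun ω => (if Y ω < θ then (1 : ℝ) else 0) - τ |
              MeasurableSpace.comap (fun ω => g (X ω)) inferInstance] := by
  classical
  obtain ⟨hc0, hc1⟩ := hc
  obtain ⟨hτ0, hτ1⟩ := hτ
  set ψ : Ω → ℝ := fun ω => (if Y ω < θ then (1 : ℝ) else 0) - τ with hψ_def
  have hmXle : (MeasurableSpace.comap X inferInstance) ≤ (inferInstance : MeasurableSpace Ω) := hX.comap_le
  have hXmX : Measurable[(MeasurableSpace.comap X inferInstance)] X := Measurable.of_comap_le le_rfl
  have hSX : (MeasurableSpace.comap (fun ω => g (X ω)) inferInstance) ≤ (MeasurableSpace.comap X inferInstance) := Measurable.comap_le (hg.comp hXmX)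
  have hmSle : (MeasurableSpace.comap (fun ω => g (X ω)) inferInstance) ≤ (inferInstance : MeasurableSpace Ω) := hSX.trans hmXle
  have h1c : (0 : ℝ) < 1 - c := by linarith
  -- basic bounds
  have hπs_pos : ∀ x, 0 < πs x := fun x => hc0.trans (hπsRange x).1
  have hπsinv_pos : ∀ x, 0 < (πs x)⁻¹ := fun x => inv_pos.mpr (hπs_pos x)
  have hπsinv_le : ∀ x, (πs x)⁻¹ ≤ c⁻¹ := fun x =>
    inv_anti₀ hc0 (hπsRange x).1.le
  have hπsinv_ge : ∀ x, (1 - c)⁻¹ ≤ (πs x)⁻¹ := fun x =>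
    inv_anti₀ (hπs_pos x) (hπsRange x).2.le
  have hπsinv_norm : ∀ ω, ‖(πs (X ω))⁻¹‖ ≤ c⁻¹ := fun ω => by
    rw [Real.norm_eq_abs, abs_of_pos (hπsinv_pos _)]; exact hπsinv_le _
  have hT0le : ∀ ω, 0 ≤ T ω := fun ω => by rcases hT01 ω with h | h <;> simp [h]
  have hTle1 : ∀ ω, T ω ≤ 1 := fun ω => by rcases hT01 ω with h | h <;> simp [h]
  have hTnorm : ∀ ω, ‖T ω‖ ≤ 1 := fun ω => by
    rw [Real.norm_eq_abs, abs_le]; exact ⟨by linarith [hT0le ω], hTle1 ω⟩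
  have hψm : Measurable ψ :=
    (Measurable.ite (measurableSet_lt hY measurable_const) measurable_const
      measurable_const).sub measurable_const
  have hψb : ∀ ω, ‖ψ ω‖ ≤ 1 := by
    intro ω
    rw [Real.norm_eq_abs]
    simp only [hψ_def]
    split_ifs <;> rw [abs_le] <;> constructor <;> linarith
  have hTψnorm : ∀ ω, ‖T ω * ψ ω‖ ≤ 1 := fun ω => by
    rw [norm_mul]
    calc ‖T ω‖ * ‖ψ ω‖ ≤ 1 * 1 :=
          mul_le_mul (hTnorm ω) (hψb ω) (norm_nonneg _) zero_le_one
      _ = 1 := mul_one 1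
  -- integrability
  have hint : ∀ (f : Ω → ℝ), Measurable f → ∀ C : ℝ, (∀ ω, ‖f ω‖ ≤ C) → Integrable f μ :=
    fun f hf C hC => (integrable_const C).mono' hf.aestronglyMeasurable
      (Filter.Eventually.of_forall hC)
  have hintT : Integrable T μ := hint T hT 1 hTnorm
  have hintψ : Integrable ψ μ := hint ψ hψm 1 hψb
  have hintTψ : Integrable (fun ω => T ω * ψ ω) μ := hint _ (hT.mul hψm) 1 hTψnorm
  have hintW : Integrable (fun ω => (πs (X ω))⁻¹ * T ω) μ := by
    refine hint _ ((hπs.inv.comp hX).mul hT) (c⁻¹ * 1) fun ω => ?_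
    rw [norm_mul]
    exact mul_le_mul (hπsinv_norm ω) (hTnorm ω) (norm_nonneg _) (by positivity)
  have hintWψ : Integrable (fun ω => (πs (X ω))⁻¹ * (T ω * ψ ω)) μ := by
    refine hint _ ((hπs.inv.comp hX).mul (hT.mul hψm)) (c⁻¹ * 1) fun ω => ?_
    rw [norm_mul]
    exact mul_le_mul (hπsinv_norm ω) (hTψnorm ω) (norm_nonneg _) (by positivity)
  have hintfun : Integrable (fun ω => (πs (X ω))⁻¹ * (μ[T|(MeasurableSpace.comap X inferInstance)]) ω) μ :=
    Integrable.bdd_mul integrable_condExp (hπs.inv.comp hX).aestronglyMeasurable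
      (Filter.Eventually.of_forall fun ω => hπsinv_norm ω)
  -- indicator representations
  set A : Set Ω := T ⁻¹' {1} with hA_def
  set B : Set Ω := Y ⁻¹' Set.Iio θ with hB_def
  have hAmeas : MeasurableSet A := hT (measurableSet_singleton 1)
  have hBmeas : MeasurableSet B := hY measurableSet_Iio
  have hTA : T = A.indicator fun _ => (1 : ℝ) := by
    funext ω
    rcases hT01 ω with h | h <;>
      simp [hA_def, Set.indicator_apply, Set.mem_preimage, h]
  have hTψ : (fun ω => T ω * ψ ω)
      = (A ∩ B).indicator (fun _ => (1 : ℝ)) - τ • A.indicator (fun _ => (1 : ℝ)) := by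
    funext ω
    simp only [Pi.sub_apply, Pi.smul_apply, smul_eq_mul]
    rcases hT01 ω with h | h
    · have hA' : ω ∉ A := by simp [hA_def, h]
      have hAB' : ω ∉ A ∩ B := fun hx => hA' hx.1
      simp [h, Set.indicator_apply, hA', hAB']
    · have hA' : ω ∈ A := by simp [hA_def, h]
      by_cases hB' : ω ∈ B
      · have hlt : Y ω < θ := hB'
        have hAB' : ω ∈ A ∩ B := ⟨hA', hB'⟩
        simp [h, hψ_def, Set.indicator_apply, hA', hAB', hlt]
      · have hlt : ¬ Y ω < θ := hB'
        have hAB' : ω ∉ A ∩ B := fun hx => hB' hx.2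
        simp [h, hψ_def, Set.indicator_apply, hA', hAB', hlt]
  -- conditional expectation of ψ at (MeasurableSpace.comap X inferInstance)
  have hψsubX : μ[ψ|(MeasurableSpace.comap X inferInstance)] =ᵐ[μ] fun ω => (μ[B.indicator (fun _ => (1 : ℝ))|(MeasurableSpace.comap X inferInstance)]) ω - τ := by
    have heq : ψ = B.indicator (fun _ => (1 : ℝ)) - fun _ => τ := by
      funext ω
      simp only [hψ_def, Pi.sub_apply, Set.indicator_apply, hB_def, Set.mem_preimage,
        Set.mem_Iio]
    rw [heq]
    have h1 := condExp_sub (μ := μ) (m := (MeasurableSpace.comap X inferInstance))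
      ((integrable_const (1 : ℝ)).indicator hBmeas) (integrable_const τ)
    filter_upwards [h1] with ω hω
    simp only [Pi.sub_apply] at hω ⊢
    simp only [hω, condExp_const hmXle τ]
  -- product rule from conditional independence
  have h3 : μ[(A ∩ B).indicator (fun _ => (1 : ℝ))|(MeasurableSpace.comap X inferInstance)]
      =ᵐ[μ] fun ω => (μ[A.indicator (fun _ => (1 : ℝ))|(MeasurableSpace.comap X inferInstance)]) ω
        * (μ[B.indicator (fun _ => (1 : ℝ))|(MeasurableSpace.comap X inferInstance)]) ω :=
    (condIndepFun_iff_condExp_inter_preimage_eq_mul (μ := μ) hT hY).mp hunconf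
      {1} (Set.Iio θ) (measurableSet_singleton 1) measurableSet_Iio
  have e1 : μ[(fun ω => T ω * ψ ω)|(MeasurableSpace.comap X inferInstance)]
      =ᵐ[μ] fun ω => (μ[(A ∩ B).indicator (fun _ => (1 : ℝ))|(MeasurableSpace.comap X inferInstance)]) ω
        - τ * (μ[A.indicator (fun _ => (1 : ℝ))|(MeasurableSpace.comap X inferInstance)]) ω := by
    rw [hTψ]
    have h1 := condExp_sub (μ := μ) (m := (MeasurableSpace.comap X inferInstance))
      ((integrable_const (1 : ℝ)).indicator (hAmeas.inter hBmeas))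
      ((((integrable_const (1 : ℝ)).indicator hAmeas)).smul τ)
    have h2 := condExp_smul (μ := μ) (m := (MeasurableSpace.comap X inferInstance)) τ (A.indicator (fun _ => (1 : ℝ)))
    filter_upwards [h1, h2] with ω hω1 hω2
    simp only [Pi.sub_apply, Pi.smul_apply, smul_eq_mul] at hω1 hω2 ⊢
    rw [hω1, hω2]
  have hfact : μ[(fun ω => T ω * ψ ω)|(MeasurableSpace.comap X inferInstance)]
      =ᵐ[μ] fun ω => (μ[T|(MeasurableSpace.comap X inferInstance)]) ω * (μ[ψ|(MeasurableSpace.comap X inferInstance)]) ω := by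
    have hTm : μ[T|(MeasurableSpace.comap X inferInstance)] = μ[A.indicator (fun _ => (1 : ℝ))|(MeasurableSpace.comap X inferInstance)] := by rw [← hTA]
    rw [hTm]
    filter_upwards [e1, h3, hψsubX] with ω h1' h3' h4'
    simp only [h1', h3', h4']
    ring
  -- pull-out of (πs ∘ X)⁻¹ at (MeasurableSpace.comap X inferInstance)
  have hπsX : Measurable[(MeasurableSpace.comap X inferInstance)] fun ω => (πs (X ω))⁻¹ := (hπs.inv).comp hXmX
  have hpullT : μ[(fun ω => (πs (X ω))⁻¹ * T ω)|(MeasurableSpace.comap X inferInstance)]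
      =ᵐ[μ] fun ω => (πs (X ω))⁻¹ * (μ[T|(MeasurableSpace.comap X inferInstance)]) ω :=
    condExp_mul_of_stronglyMeasurable_left hπsX.stronglyMeasurable hintW hintT
  have hpullTψ : μ[(fun ω => (πs (X ω))⁻¹ * (T ω * ψ ω))|(MeasurableSpace.comap X inferInstance)]
      =ᵐ[μ] fun ω => (πs (X ω))⁻¹ * (μ[(fun ω' => T ω' * ψ ω')|(MeasurableSpace.comap X inferInstance)]) ω :=
    condExp_mul_of_stronglyMeasurable_left hπsX.stronglyMeasurable hintWψ hintTψ
  -- φ₀ and its lower bound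
  have hφ0 : μ[(fun ω => (πs (X ω))⁻¹ * T ω)|(MeasurableSpace.comap (fun ω => g (X ω)) inferInstance)]
      =ᵐ[μ] μ[(fun ω => (πs (X ω))⁻¹ * (μ[T|(MeasurableSpace.comap X inferInstance)]) ω)|(MeasurableSpace.comap (fun ω => g (X ω)) inferInstance)] :=
    (condExp_condExp_of_le hSX hmXle).symm.trans (condExp_congr_ae hpullT)
  set δ : ℝ := (1 - c)⁻¹ * c with hδ_def
  have hδpos : 0 < δ := mul_pos (inv_pos.mpr h1c) hc0
  have hge : ∀ᵐ ω ∂μ, δ ≤ (πs (X ω))⁻¹ * (μ[T|(MeasurableSpace.comap X inferInstance)]) ω := by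
    filter_upwards [hpos] with ω hω
    exact mul_le_mul (hπsinv_ge _) hω.1.le hc0.le (hπsinv_pos _).le
  have hφ0ge : ∀ᵐ ω ∂μ, δ ≤ (μ[(fun ω' => (πs (X ω'))⁻¹ * T ω')|(MeasurableSpace.comap (fun ω => g (X ω)) inferInstance)]) ω := by
    have h1 : μ[(fun _ => δ)|(MeasurableSpace.comap (fun ω => g (X ω)) inferInstance)] ≤ᵐ[μ] μ[(fun ω => (πs (X ω))⁻¹ * (μ[T|(MeasurableSpace.comap X inferInstance)]) ω)|(MeasurableSpace.comap (fun ω => g (X ω)) inferInstance)] :=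
      condExp_mono (integrable_const δ) hintfun hge
    filter_upwards [h1, hφ0] with ω h1' h2'
    rw [h2']
    calc δ = (μ[(fun _ => δ)|(MeasurableSpace.comap (fun ω => g (X ω)) inferInstance)]) ω := by
          rw [condExp_const (μ := μ) hmSle δ]
      _ ≤ _ := h1'
  -- φ₁ through (MeasurableSpace.comap X inferInstance)
  have hφ1a : μ[(fun ω => (πs (X ω))⁻¹ * T ω * ψ ω)|(MeasurableSpace.comap (fun ω => g (X ω)) inferInstance)]
      =ᵐ[μ] μ[(fun ω => ((πs (X ω))⁻¹ * (μ[T|(MeasurableSpace.comap X inferInstance)]) ω) * (μ[ψ|(MeasurableSpace.comap X inferInstance)]) ω)|(MeasurableSpace.comap (fun ω => g (X ω)) inferInstance)] := by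
    have e0 : (fun ω => (πs (X ω))⁻¹ * T ω * ψ ω)
        = fun ω => (πs (X ω))⁻¹ * (T ω * ψ ω) := by
      funext ω; ring
    rw [e0]
    refine (condExp_condExp_of_le hSX hmXle).symm.trans (condExp_congr_ae ?_)
    filter_upwards [hpullTψ, hfact] with ω h1' h2'
    simp only [h1', h2']
    ring
  -- normalize the goal
  simp only [pow_zero, mul_one, pow_one]
  show (∃ δ' : ℝ, 0 < δ' ∧ ∀ᵐ ω ∂μ,
      δ' ≤ (μ[(fun ω' => (πs (X ω'))⁻¹ * T ω')|(MeasurableSpace.comap (fun ω => g (X ω)) inferInstance)]) ω) ∧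
    (fun ω => (μ[(fun ω' => (πs (X ω'))⁻¹ * T ω' * ψ ω')|(MeasurableSpace.comap (fun ω => g (X ω)) inferInstance)]) ω
        / (μ[(fun ω' => (πs (X ω'))⁻¹ * T ω')|(MeasurableSpace.comap (fun ω => g (X ω)) inferInstance)]) ω)
      =ᵐ[μ] μ[ψ|(MeasurableSpace.comap (fun ω => g (X ω)) inferInstance)]
  refine ⟨⟨δ, hδpos, hφ0ge⟩, ?_⟩
  rcases hdr with hdr | hdr
  · -- propensity score is correct
    have hone : (fun ω => (πs (X ω))⁻¹ * (μ[T|(MeasurableSpace.comap X inferInstance)]) ω) =ᵐ[μ] fun _ => (1 : ℝ) := by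
      filter_upwards [hdr, hpos] with ω h1' h2'
      have h1'' : πs (X ω) = (μ[T|(MeasurableSpace.comap X inferInstance)]) ω := h1'
      show (πs (X ω))⁻¹ * (μ[T|(MeasurableSpace.comap X inferInstance)]) ω = 1
      rw [← h1'']
      exact inv_mul_cancel₀ (ne_of_gt (hπs_pos _))
    have hφ0one : μ[(fun ω' => (πs (X ω'))⁻¹ * T ω')|(MeasurableSpace.comap (fun ω => g (X ω)) inferInstance)] =ᵐ[μ] fun _ => (1 : ℝ) := by
      refine hφ0.trans ((condExp_congr_ae hone).trans ?_)
      rw [condExp_const (μ := μ) hmSle (1 : ℝ)]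
    have hφ1ψ : μ[(fun ω' => (πs (X ω'))⁻¹ * T ω' * ψ ω')|(MeasurableSpace.comap (fun ω => g (X ω)) inferInstance)] =ᵐ[μ] μ[ψ|(MeasurableSpace.comap (fun ω => g (X ω)) inferInstance)] := by
      refine hφ1a.trans ?_
      have e : (fun ω => ((πs (X ω))⁻¹ * (μ[T|(MeasurableSpace.comap X inferInstance)]) ω) * (μ[ψ|(MeasurableSpace.comap X inferInstance)]) ω) =ᵐ[μ] μ[ψ|(MeasurableSpace.comap X inferInstance)] := by
        filter_upwards [hone] with ω h1'
        have h1'' : (πs (X ω))⁻¹ * (μ[T|(MeasurableSpace.comap X inferInstance)]) ω = 1 := h1'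
        show (πs (X ω))⁻¹ * (μ[T|(MeasurableSpace.comap X inferInstance)]) ω * (μ[ψ|(MeasurableSpace.comap X inferInstance)]) ω = (μ[ψ|(MeasurableSpace.comap X inferInstance)]) ω
        rw [h1'', one_mul]
      exact (condExp_congr_ae e).trans (condExp_condExp_of_le hSX hmXle)
    filter_upwards [hφ0one, hφ1ψ] with ω h1' h2'
    show (μ[(fun ω' => (πs (X ω'))⁻¹ * T ω' * ψ ω')|(MeasurableSpace.comap (fun ω => g (X ω)) inferInstance)]) ω
        / (μ[(fun ω' => (πs (X ω'))⁻¹ * T ω')|(MeasurableSpace.comap (fun ω => g (X ω)) inferInstance)]) ω = (μ[ψ|(MeasurableSpace.comap (fun ω => g (X ω)) inferInstance)]) ω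
    rw [h1', h2']
    simp
  · -- dimension reduction is correct
    have hq : μ[ψ|(MeasurableSpace.comap X inferInstance)] =ᵐ[μ] μ[ψ|(MeasurableSpace.comap (fun ω => g (X ω)) inferInstance)] := hdr.symm
    have hqb : ∀ᵐ ω ∂μ, ‖(μ[ψ|(MeasurableSpace.comap (fun ω => g (X ω)) inferInstance)]) ω‖ ≤ (1 : ℝ) := by
      have hb : ∀ᵐ ω ∂μ, |ψ ω| ≤ ((1 : NNReal) : ℝ) :=
        Filter.Eventually.of_forall fun ω => by simpa [Real.norm_eq_abs] using hψb ω
      filter_upwards [ae_bdd_condExp_of_ae_bdd (m := (MeasurableSpace.comap (fun ω => g (X ω)) inferInstance)) hb] with ω hω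
      simpa [Real.norm_eq_abs] using hω
    have hpullq : μ[(fun ω => (μ[ψ|(MeasurableSpace.comap (fun ω => g (X ω)) inferInstance)]) ω * ((πs (X ω))⁻¹ * (μ[T|(MeasurableSpace.comap X inferInstance)]) ω))|(MeasurableSpace.comap (fun ω => g (X ω)) inferInstance)]
        =ᵐ[μ] fun ω => (μ[ψ|(MeasurableSpace.comap (fun ω => g (X ω)) inferInstance)]) ω
          * (μ[(fun ω' => (πs (X ω'))⁻¹ * (μ[T|(MeasurableSpace.comap X inferInstance)]) ω')|(MeasurableSpace.comap (fun ω => g (X ω)) inferInstance)]) ω :=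
      condExp_stronglyMeasurable_mul_of_bound hmSle stronglyMeasurable_condExp hintfun 1 hqb
    have hφ1q : μ[(fun ω' => (πs (X ω'))⁻¹ * T ω' * ψ ω')|(MeasurableSpace.comap (fun ω => g (X ω)) inferInstance)]
        =ᵐ[μ] fun ω => (μ[ψ|(MeasurableSpace.comap (fun ω => g (X ω)) inferInstance)]) ω * (μ[(fun ω' => (πs (X ω'))⁻¹ * T ω')|(MeasurableSpace.comap (fun ω => g (X ω)) inferInstance)]) ω := by
      refine hφ1a.trans ?_
      have e : (fun ω => ((πs (X ω))⁻¹ * (μ[T|(MeasurableSpace.comap X inferInstance)]) ω) * (μ[ψ|(MeasurableSpace.comap X inferInstance)]) ω)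
          =ᵐ[μ] fun ω => (μ[ψ|(MeasurableSpace.comap (fun ω => g (X ω)) inferInstance)]) ω * ((πs (X ω))⁻¹ * (μ[T|(MeasurableSpace.comap X inferInstance)]) ω) := by
        filter_upwards [hq] with ω hω
        have hω' : (μ[ψ|(MeasurableSpace.comap X inferInstance)]) ω = (μ[ψ|(MeasurableSpace.comap (fun ω => g (X ω)) inferInstance)]) ω := hω
        show (πs (X ω))⁻¹ * (μ[T|(MeasurableSpace.comap X inferInstance)]) ω * (μ[ψ|(MeasurableSpace.comap X inferInstance)]) ω
            = (μ[ψ|(MeasurableSpace.comap (fun ω => g (X ω)) inferInstance)]) ω * ((πs (X ω))⁻¹ * (μ[T|(MeasurableSpace.comap X inferInstance)]) ω)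
        rw [hω']; ring
      refine (condExp_congr_ae e).trans (hpullq.trans ?_)
      filter_upwards [hφ0] with ω hω
      show (μ[ψ|(MeasurableSpace.comap (fun ω => g (X ω)) inferInstance)]) ω * (μ[(fun ω' => (πs (X ω'))⁻¹ * (μ[T|(MeasurableSpace.comap X inferInstance)]) ω')|(MeasurableSpace.comap (fun ω => g (X ω)) inferInstance)]) ω
          = (μ[ψ|(MeasurableSpace.comap (fun ω => g (X ω)) inferInstance)]) ω * (μ[(fun ω' => (πs (X ω'))⁻¹ * T ω')|(MeasurableSpace.comap (fun ω => g (X ω)) inferInstance)]) ω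
      rw [← hω]
    filter_upwards [hφ1q, hφ0ge] with ω h1' h2'
    show (μ[(fun ω' => (πs (X ω'))⁻¹ * T ω' * ψ ω')|(MeasurableSpace.comap (fun ω => g (X ω)) inferInstance)]) ω
        / (μ[(fun ω' => (πs (X ω'))⁻¹ * T ω')|(MeasurableSpace.comap (fun ω => g (X ω)) inferInstance)]) ω = (μ[ψ|(MeasurableSpace.comap (fun ω => g (X ω)) inferInstance)]) ω
    rw [h1', mul_div_assoc, div_self (ne_of_gt (lt_of_lt_of_le hδpos h2')), mul_one]
end
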